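/- arXiv:math/0701018 — 5 statements merged into one kernel-verified Lean document; each statement's English description precedes it below -/
import Mathlib

section
/- Let n ≥ 1 and fix signs ε₁,…,ε₍ₙ₋₁₎ ∈ {−1,1} and k ∈ ℤ_{2n+1}. Then the set S = {(x₁,…,x₍ₙ₋₁₎, k + Σ_{i=1}^{n−1} εᵢ·(i+1)·xᵢ) : xᵢ ∈ ℤ_{2n+1}} (arithmetic in ℤ_{2n+1}) is a perfect dominating set of the graph Γ(ℤ_{2n+1}ⁿ, 𝒰). -/
/-- The Cayley graph Γ(ℤ_{2n+1}ⁿ, 𝒰) with 𝒰 = {±e₁,…,±eₙ}. -/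
def cay (n : ℕ) : SimpleGraph (Fin n → ZMod (2 * n + 1)) where
  Adj x y := ∃ i : Fin n, x - y = Pi.single i 1 ∨ y - x = Pi.single i 1
  symm := by
    constructor
    rintro x y ⟨i, h | h⟩
    · exact ⟨i, Or.inr h⟩
    · exact ⟨i, Or.inl h⟩
  loopless := by
    constructor
    rintro x ⟨i, h | h⟩ <;>
    · have hn : 0 < n := i.pos
      haveI : Fact (1 < 2 * n + 1) := ⟨by omega⟩
      simp only [sub_self] at h
      have h1 := congrFun h i
      rw [Pi.zero_apply, Pi.single_eq_same] at h1
      exact one_ne_zero h1.symm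

instance (n : ℕ) : DecidableRel (cay n).Adj :=
  fun x y => Fintype.decidableExistsFintype (p := fun i : Fin n =>
    x - y = Pi.single i 1 ∨ y - x = Pi.single i 1)

/-- `S` is a dominating set of `G`. -/
def Dom {V : Type*} (G : SimpleGraph V) (S : Set V) : Prop :=
  ∀ v : V, ∃ u ∈ S, u = v ∨ G.Adj u v

/-- `S` is a perfect dominating set of `G`: every vertex is dominated by
exactly one element of `S`. -/
def PerfDom {V : Type*} (G : SimpleGraph V) (S : Set V) : Prop :=
  ∀ v : V, ∃! u : V, u ∈ S ∧ (u = v ∨ G.Adj u v)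


namespace Stmt0Aux

abbrev R (m : ℕ) := ZMod (2 * (m + 1) + 1)

lemma cast_inj (m : ℕ) {a b : ℕ} (ha : a < 2*(m+1)+1) (hb : b < 2*(m+1)+1)
    (h : (a : R m) = b) : a = b := by
  have h1 : ((a : ℕ) : ZMod (2*(m+1)+1)).val = a := ZMod.val_cast_of_lt ha
  have h2 : ((b : ℕ) : ZMod (2*(m+1)+1)).val = b := ZMod.val_cast_of_lt hb
  rw [← h1, ← h2, h]

lemma cast_ne_zero (m : ℕ) {a : ℕ} (ha : 1 ≤ a) (ha' : a ≤ m+1) : (a : R m) ≠ 0 := by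
  intro h
  have : a = 0 := cast_inj m (by omega) (by omega) (by simpa using h)
  omega

lemma cast_ne_neg (m : ℕ) {a b : ℕ} (ha : 1 ≤ a) (ha' : a ≤ m+1)
    (hb : 1 ≤ b) (hb' : b ≤ m+1) : (a : R m) ≠ -(b : R m) := by
  intro h
  have h0 : ((a + b : ℕ) : R m) = ((0 : ℕ) : R m) := by push_cast; rw [h]; ring
  have : a + b = 0 := cast_inj m (by omega) (by omega) h0
  omega

/-- natural weights: `1` at the last coordinate, `i+2` at `castSucc i`. -/
def D (m : ℕ) : Fin (m + 1) → ℕ := Fin.lastCases 1 (fun i => (i : ℕ) + 2)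

lemma D_last (m : ℕ) : D m (Fin.last m) = 1 := by simp [D]
lemma D_castSucc (m : ℕ) (i : Fin m) : D m i.castSucc = (i : ℕ) + 2 := by simp [D]

lemma D_pos (m : ℕ) (j : Fin (m+1)) : 1 ≤ D m j := by
  induction j using Fin.lastCases with
  | last => simp [D_last]
  | cast i => simp [D_castSucc]

lemma D_le (m : ℕ) (j : Fin (m+1)) : D m j ≤ m + 1 := by
  induction j using Fin.lastCases with
  | last => simp [D_last]
  | cast i => have := i.isLt; simp [D_castSucc]

lemma D_inj (m : ℕ) : Function.Injective (D m) := by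
  intro j j' h
  induction j using Fin.lastCases with
  | last =>
    induction j' using Fin.lastCases with
    | last => rfl
    | cast i' => rw [D_last, D_castSucc] at h; omega
  | cast i =>
    induction j' using Fin.lastCases with
    | last => rw [D_last, D_castSucc] at h; omega
    | cast i' =>
      rw [D_castSucc, D_castSucc] at h
      have : (i : ℕ) = i' := by omega
      congr 1
      exact Fin.ext this

variable (m : ℕ) (ε : Fin m → R m)

/-- coefficients of the linear form. -/
def C : Fin (m+1) → R m :=
  Fin.lastCases 1 (fun i => -(ε i * ((i : ℕ) + 2)))

lemma C_last : C m ε (Fin.last m) = 1 := by simp [C]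
lemma C_castSucc (i : Fin m) : C m ε i.castSucc = -(ε i * ((i : ℕ) + 2)) := by simp [C]

lemma C_sign (hε : ∀ i, ε i = 1 ∨ ε i = -1) (j : Fin (m+1)) :
    C m ε j = (D m j : R m) ∨ C m ε j = -(D m j : R m) := by
  induction j using Fin.lastCases with
  | last => left; rw [C_last, D_last]; norm_num
  | cast i =>
    rw [C_castSucc, D_castSucc]
    rcases hε i with h | h
    · right; rw [h]; push_cast; ring
    · left; rw [h]; push_cast; ring

lemma C_ne_zero (hε : ∀ i, ε i = 1 ∨ ε i = -1) (j : Fin (m+1)) : C m ε j ≠ 0 := by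
  rcases C_sign m ε hε j with h | h <;> rw [h]
  · exact cast_ne_zero m (D_pos m j) (D_le m j)
  · intro h0
    exact cast_ne_zero m (D_pos m j) (D_le m j) (by rw [← neg_neg ((D m j : R m)), h0, neg_zero])

def F : Option (Fin (m+1) × Bool) → R m
  | none => 0
  | some (j, b) => (if b then 1 else -1) * C m ε j

lemma F_some (j : Fin (m+1)) (b : Bool) :
    F m ε (some (j, b)) = (if b then 1 else -1) * C m ε j := rfl

lemma F_some_sign (hε : ∀ i, ε i = 1 ∨ ε i = -1) (j : Fin (m+1)) (b : Bool) :
    F m ε (some (j, b)) = (D m j : R m) ∨ F m ε (some (j, b)) = -(D m j : R m) := by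
  rcases C_sign m ε hε j with h | h <;> cases b
  · right; simp [F_some, h]
  · left; simp [F_some, h]
  · left; simp [F_some, h]
  · right; simp [F_some, h]

lemma F_inj (hε : ∀ i, ε i = 1 ∨ ε i = -1) : Function.Injective (F m ε) := by
  intro x y h
  match x, y with
  | none, none => rfl
  | none, some (j, b) =>
    exfalso
    rcases F_some_sign m ε hε j b with hs | hs <;> rw [hs] at h
    · exact cast_ne_zero m (D_pos m j) (D_le m j) h.symm
    · exact cast_ne_zero m (D_pos m j) (D_le m j) (by rw [← neg_neg ((D m j : R m)), ← h]; simp [F])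
  | some (j, b), none =>
    exfalso
    rcases F_some_sign m ε hε j b with hs | hs <;> rw [hs] at h
    · exact cast_ne_zero m (D_pos m j) (D_le m j) h
    · exact cast_ne_zero m (D_pos m j) (D_le m j) (by rw [← neg_neg ((D m j : R m)), h]; simp [F])
  | some (j, b), some (j', b') =>
    have hjj : j = j' := by
      apply D_inj m
      rcases F_some_sign m ε hε j b with hs | hs <;>
        rcases F_some_sign m ε hε j' b' with hs' | hs' <;>
          rw [hs, hs'] at h
      · exact cast_inj m (by have := D_le m j; omega) (by have := D_le m j'; omega) h
      · exact absurd h (cast_ne_neg m (D_pos m j) (D_le m j) (D_pos m j') (D_le m j'))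
      · exact absurd (neg_eq_iff_eq_neg.mp h)
          (cast_ne_neg m (D_pos m j) (D_le m j) (D_pos m j') (D_le m j'))
      · exact cast_inj m (by have := D_le m j; omega) (by have := D_le m j'; omega)
          (neg_injective h)
    subst hjj
    have hbb : b = b' := by
      by_contra hne
      have h' := h
      rw [F_some, F_some] at h'
      have hC : C m ε j = -(C m ε j) := by
        cases b <;> cases b'
        · exact absurd rfl hne
        · norm_num at h'; linear_combination -h'
        · norm_num at h'; exact h'
        · exact absurd rfl hne
      rcases C_sign m ε hε j with hs | hs <;> rw [hs] at hC
      · exact cast_ne_neg m (D_pos m j) (D_le m j) (D_pos m j) (D_le m j) hC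
      · exact cast_ne_neg m (D_pos m j) (D_le m j) (D_pos m j) (D_le m j)
          (neg_injective hC)
    rw [hbb]

lemma F_bij (hε : ∀ i, ε i = 1 ∨ ε i = -1) : Function.Bijective (F m ε) := by
  rw [Fintype.bijective_iff_injective_and_card]
  refine ⟨F_inj m ε hε, ?_⟩
  simp only [Fintype.card_option, Fintype.card_prod, Fintype.card_fin,
    Fintype.card_bool, ZMod.card]
  ring

end Stmt0Aux
namespace Stmt0Aux

/-- the linear form. -/
def g (m : ℕ) (ε : Fin m → R m) (v : Fin (m+1) → R m) : R m := ∑ j, C m ε j * v j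

lemma g_eq (m : ℕ) (ε : Fin m → R m) (v : Fin (m+1) → R m) :
    g m ε v = v (Fin.last m) - ∑ i : Fin m, ε i * ((i : ℕ) + 2) * v i.castSucc := by
  rw [g, Fin.sum_univ_castSucc]
  simp only [C_last, C_castSucc, one_mul]
  rw [sub_eq_add_neg, add_comm, ← Finset.sum_neg_distrib]
  congr 1
  apply Finset.sum_congr rfl
  intro i _
  ring

lemma mem_iff (m : ℕ) (ε : Fin m → R m) (k : R m) (v : Fin (m+1) → R m) :
    (v (Fin.last m) = k + ∑ i : Fin m, ε i * ((i : ℕ) + 2) * v i.castSucc) ↔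
      g m ε v = k := by
  rw [g_eq, sub_eq_iff_eq_add, add_comm k]

lemma g_add_single (m : ℕ) (ε : Fin m → R m) (v : Fin (m+1) → R m)
    (j₀ : Fin (m+1)) (a : R m) :
    g m ε (v + Pi.single j₀ a) = g m ε v + a * C m ε j₀ := by
  simp only [g, Pi.add_apply, mul_add, Finset.sum_add_distrib]
  congr 1
  simp [Pi.single_apply, mul_ite, Finset.sum_ite_eq']
  ring

/-- the displacement associated to an index. -/
def delta (m : ℕ) : Option (Fin (m+1) × Bool) → (Fin (m+1) → R m)
  | none => 0
  | some (j, b) => Pi.single j (if b then 1 else -1)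

lemma g_add_delta (m : ℕ) (ε : Fin m → R m) (v : Fin (m+1) → R m)
    (x : Option (Fin (m+1) × Bool)) :
    g m ε (v + delta m x) = g m ε v + F m ε x := by
  match x with
  | none => simp [delta, F]
  | some (j, b) => rw [delta, F_some, g_add_single]

lemma dom_delta (m : ℕ) (v : Fin (m+1) → R m) (x : Option (Fin (m+1) × Bool)) :
    v + delta m x = v ∨ (cay (m+1)).Adj (v + delta m x) v := by
  match x with
  | none => left; simp [delta]
  | some (j, b) =>
    right
    refine ⟨j, ?_⟩
    cases b
    · right
      simp only [delta]
      funext j'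
      by_cases hj : j' = j <;> simp [Pi.single_apply, hj]
    · left
      simp only [delta]
      funext j'
      by_cases hj : j' = j <;> simp [Pi.single_apply, hj]

lemma dom_exists (m : ℕ) (v u : Fin (m+1) → R m)
    (h : u = v ∨ (cay (m+1)).Adj u v) : ∃ x, u = v + delta m x := by
  rcases h with rfl | ⟨j, h | h⟩
  · exact ⟨none, by simp [delta]⟩
  · refine ⟨some (j, true), ?_⟩
    simp only [delta, if_true]
    rw [← h]; ring
  · refine ⟨some (j, false), ?_⟩
    have hs : delta m (some (j, false)) = -Pi.single (M := fun _ : Fin (m+1) => R m) j 1 := by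
      funext j'
      by_cases hj : j' = j <;> simp [delta, Pi.single_apply, hj]
    rw [hs, ← h]; ring

end Stmt0Aux

/-- For `n = m + 1 ≥ 1`, signs `ε i ∈ {−1, 1}` and `k ∈ ℤ_{2n+1}`,
the set `{(x₁,…,x₍ₙ₋₁₎, k + Σᵢ εᵢ·(i+1)·xᵢ)}` is a perfect dominating set of
`Γ(ℤ_{2n+1}ⁿ, 𝒰)`.  (Coordinate `i ∈ {1,…,n−1}` with coefficient `i+1` corresponds
to the 0-based index `i : Fin m` with coefficient `i + 2`.) -/
theorem stmt0 (m : ℕ) (ε : Fin m → ZMod (2 * (m + 1) + 1))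
    (hε : ∀ i, ε i = 1 ∨ ε i = -1) (k : ZMod (2 * (m + 1) + 1)) :
    PerfDom (cay (m + 1))
      {v : Fin (m + 1) → ZMod (2 * (m + 1) + 1) |
        v (Fin.last m) = k + ∑ i : Fin m, ε i * ((i : ℕ) + 2) * v i.castSucc} := by
  intro v
  obtain ⟨x₀, hx₀, hx₀u⟩ := (Stmt0Aux.F_bij m ε hε).existsUnique (k - Stmt0Aux.g m ε v)
  refine ⟨v + Stmt0Aux.delta m x₀, ⟨?_, Stmt0Aux.dom_delta m v x₀⟩, ?_⟩
  · rw [Set.mem_setOf_eq, Stmt0Aux.mem_iff, Stmt0Aux.g_add_delta, hx₀]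
    ring
  · rintro u ⟨hu_mem, hu_dom⟩
    obtain ⟨x, rfl⟩ := Stmt0Aux.dom_exists m v u hu_dom
    rw [Set.mem_setOf_eq, Stmt0Aux.mem_iff, Stmt0Aux.g_add_delta] at hu_mem
    have hFx : Stmt0Aux.F m ε x = k - Stmt0Aux.g m ε v := by
      rw [← hu_mem]; ring
    rw [hx₀u x hFx]
end

section
/- For every n ≥ 1, the domination number of Γ(ℤ_{2n+1}ⁿ, 𝒰) equals (2n+1)^{n−1}; that is, the minimum size of a dominating set of this graph is (2n+1)^{n−1}. -/
section aux

variable (m : ℕ)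

/-- weight function: x ↦ ∑ (i+1) x_i -/
def wt (x : Fin (m + 1) → ZMod (2 * (m + 1) + 1)) : ZMod (2 * (m + 1) + 1) :=
  ∑ i : Fin (m + 1), ((i : ℕ) + 1) * x i

lemma wt_add (x y : Fin (m + 1) → ZMod (2 * (m + 1) + 1)) :
    wt m (x + y) = wt m x + wt m y := by
  simp [wt, mul_add, Finset.sum_add_distrib]

lemma wt_sub (x y : Fin (m + 1) → ZMod (2 * (m + 1) + 1)) :
    wt m (x - y) = wt m x - wt m y := by
  simp [wt, mul_sub, Finset.sum_sub_distrib]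

lemma wt_single (i : Fin (m + 1)) (c : ZMod (2 * (m + 1) + 1)) :
    wt m (Pi.single i c) = ((i : ℕ) + 1) * c := by
  rw [wt, Fintype.sum_eq_single i]
  · simp
  · intro j hj
    simp [Pi.single_eq_of_ne hj]

lemma cast_ne_zero (i : Fin (m + 1)) :
    ((i : ℕ) + 1 : ZMod (2 * (m + 1) + 1)) ≠ 0 := by
  have : (((i : ℕ) + 1 : ℕ) : ZMod (2 * (m + 1) + 1)) ≠ 0 := by
    rw [Ne, ZMod.natCast_eq_zero_iff]
    have := i.isLt
    intro h
    have := Nat.le_of_dvd (by omega) h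
    omega
  simpa using this

lemma cast_succ_inj (i j : Fin (m + 1))
    (h : ((i : ℕ) + 1 : ZMod (2 * (m + 1) + 1)) = ((j : ℕ) + 1)) : i = j := by
  have hi := i.isLt
  have hj := j.isLt
  have h2 : (((i : ℕ) + 1 : ℕ) : ZMod (2 * (m + 1) + 1)) = (((j : ℕ) + 1 : ℕ)) := by
    push_cast; exact h
  have := congrArg ZMod.val h2
  rw [ZMod.val_cast_of_lt (by omega), ZMod.val_cast_of_lt (by omega)] at this
  exact Fin.ext (by omega)

lemma cast_add_ne_zero (i j : Fin (m + 1)) :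
    ((i : ℕ) + 1 : ZMod (2 * (m + 1) + 1)) + ((j : ℕ) + 1) ≠ 0 := by
  have hi := i.isLt
  have hj := j.isLt
  have : ((((i : ℕ) + 1) + ((j : ℕ) + 1) : ℕ) : ZMod (2 * (m + 1) + 1)) ≠ 0 := by
    rw [Ne, ZMod.natCast_eq_zero_iff]
    intro h
    have := Nat.le_of_dvd (by omega) h
    omega
  intro h
  apply this
  push_cast
  linear_combination h

end aux
-- continuing (will append to a.lean content)
section aux2
variable (m : ℕ)

lemma nbhd_inj (u v w : Fin (m + 1) → ZMod (2 * (m + 1) + 1))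
    (hv : u = v ∨ (cay (m + 1)).Adj u v) (hw : u = w ∨ (cay (m + 1)).Adj u w)
    (h : wt m v = wt m w) : v = w := by
  have conv : ∀ z, (u = z ∨ (cay (m + 1)).Adj u z) →
      z = u ∨ (∃ i, z = u + Pi.single i 1) ∨ (∃ i, z = u - Pi.single i 1) := by
    rintro z (rfl | ⟨i, hs | hs⟩)
    · left; rfl
    · right; right; exact ⟨i, by rw [← hs]; abel⟩
    · right; left; exact ⟨i, by rw [← hs]; abel⟩
  rcases conv v hv with rfl | ⟨i, rfl⟩ | ⟨i, rfl⟩ <;>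
      rcases conv w hw with rfl | ⟨j, rfl⟩ | ⟨j, rfl⟩ <;>
      simp only [wt_add, wt_sub, wt_single, mul_one] at h
  · rfl
  · exact absurd (show ((j : ℕ) + 1 : ZMod (2 * (m + 1) + 1)) = 0 by linear_combination -h)
      (cast_ne_zero m j)
  · exact absurd (show ((j : ℕ) + 1 : ZMod (2 * (m + 1) + 1)) = 0 by linear_combination h)
      (cast_ne_zero m j)
  · exact absurd (show ((i : ℕ) + 1 : ZMod (2 * (m + 1) + 1)) = 0 by linear_combination h)
      (cast_ne_zero m i)
  · rw [cast_succ_inj m i j (by linear_combination h)]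
  · exact absurd (show ((i : ℕ) + 1 : ZMod (2 * (m + 1) + 1)) + ((j : ℕ) + 1) = 0 by
      linear_combination h) (cast_add_ne_zero m i j)
  · exact absurd (show ((i : ℕ) + 1 : ZMod (2 * (m + 1) + 1)) = 0 by linear_combination -h)
      (cast_ne_zero m i)
  · exact absurd (show ((i : ℕ) + 1 : ZMod (2 * (m + 1) + 1)) + ((j : ℕ) + 1) = 0 by
      linear_combination -h) (cast_add_ne_zero m i j)
  · rw [cast_succ_inj m i j (by linear_combination -h)]

def nbhdF (u : Fin (m + 1) → ZMod (2 * (m + 1) + 1)) :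
    Finset (Fin (m + 1) → ZMod (2 * (m + 1) + 1)) :=
  Finset.univ.filter (fun v => u = v ∨ (cay (m + 1)).Adj u v)

lemma nbhd_card (u : Fin (m + 1) → ZMod (2 * (m + 1) + 1)) :
    (nbhdF m u).card ≤ 2 * (m + 1) + 1 := by
  have h := Finset.card_le_card_of_injOn (wt m)
    (fun a _ => Finset.mem_univ (wt m a) : ∀ a ∈ nbhdF m u, wt m a ∈ Finset.univ)
    (fun a ha b hb hab => by
      simp only [nbhdF, Finset.mem_coe, Finset.mem_filter] at ha hb
      exact nbhd_inj m u a b ha.2 hb.2 hab)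
  simpa [ZMod.card] using h

lemma lower_bound (S : Finset (Fin (m + 1) → ZMod (2 * (m + 1) + 1)))
    (hS : Dom (cay (m + 1)) ↑S) : (2 * (m + 1) + 1) ^ m ≤ S.card := by
  have hcover : (Finset.univ : Finset (Fin (m + 1) → ZMod (2 * (m + 1) + 1))) ⊆
      S.biUnion (nbhdF m) := by
    intro v _
    obtain ⟨u, hu, hd⟩ := hS v
    exact Finset.mem_biUnion.mpr ⟨u, hu, by simp [nbhdF, hd]⟩
  have h1 : (2 * (m + 1) + 1) ^ (m + 1) ≤ S.card * (2 * (m + 1) + 1) := by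
    calc (2 * (m + 1) + 1) ^ (m + 1)
        = (Finset.univ : Finset (Fin (m + 1) → ZMod (2 * (m + 1) + 1))).card := by
          simp [Finset.card_univ, ZMod.card]
      _ ≤ (S.biUnion (nbhdF m)).card := Finset.card_le_card hcover
      _ ≤ ∑ u ∈ S, (nbhdF m u).card := Finset.card_biUnion_le
      _ ≤ ∑ _u ∈ S, (2 * (m + 1) + 1) := Finset.sum_le_sum (fun u _ => nbhd_card m u)
      _ = S.card * (2 * (m + 1) + 1) := by rw [Finset.sum_const, smul_eq_mul]
  rw [pow_succ] at h1
  exact Nat.le_of_mul_le_mul_right h1 (by omega)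

end aux2

section aux3
variable (m : ℕ)

def tailsum (f : Fin m → ZMod (2 * (m + 1) + 1)) : ZMod (2 * (m + 1) + 1) :=
  ∑ i : Fin m, (((i.succ : Fin (m + 1)) : ℕ) + 1) * f i

lemma wt_cons (a : ZMod (2 * (m + 1) + 1)) (f : Fin m → ZMod (2 * (m + 1) + 1)) :
    wt m (Fin.cons a f) = a + tailsum m f := by
  rw [wt, Fin.sum_univ_succ]
  simp [tailsum]

def S0 : Finset (Fin (m + 1) → ZMod (2 * (m + 1) + 1)) :=
  Finset.univ.filter (fun x => wt m x = 0)

lemma S0_dom : Dom (cay (m + 1)) ↑(S0 m) := by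
  intro v
  have hk : (((wt m v).val : ℕ) : ZMod (2 * (m + 1) + 1)) = wt m v := ZMod.natCast_zmod_val _
  have hklt : (wt m v).val < 2 * (m + 1) + 1 := ZMod.val_lt _
  set k : ℕ := (wt m v).val with hkdef
  rcases Nat.lt_or_ge k 1 with h0 | h1
  · refine ⟨v, ?_, Or.inl rfl⟩
    simp only [S0, Finset.coe_filter, Set.mem_setOf_eq, Finset.mem_univ, true_and]
    rw [← hk]
    interval_cases k
    simp
  rcases Nat.lt_or_ge k (m + 2) with h2 | h2
  · -- 1 ≤ k ≤ m + 1 : dominator v - e_{k-1}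
    set i : Fin (m + 1) := ⟨k - 1, by omega⟩ with hidef
    refine ⟨v - Pi.single i 1, ?_, Or.inr ⟨i, Or.inr (by abel)⟩⟩
    simp only [S0, Finset.coe_filter, Set.mem_setOf_eq, Finset.mem_univ, true_and]
    rw [wt_sub, wt_single, mul_one, ← hk]
    have hival : (i : ℕ) = k - 1 := rfl
    rw [hival, Nat.cast_sub h1, Nat.cast_one]
    ring
  · -- m + 2 ≤ k ≤ 2m + 2 : dominator v + e_{2(m+1)-k}
    set i : Fin (m + 1) := ⟨2 * (m + 1) - k, by omega⟩ with hidef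
    refine ⟨v + Pi.single i 1, ?_, Or.inr ⟨i, Or.inl (by abel)⟩⟩
    simp only [S0, Finset.coe_filter, Set.mem_setOf_eq, Finset.mem_univ, true_and]
    rw [wt_add, wt_single, mul_one, ← hk]
    have hival : (i : ℕ) = 2 * (m + 1) - k := rfl
    have hz := ZMod.natCast_self (2 * (m + 1) + 1)
    push_cast at hz
    rw [hival, Nat.cast_sub (by omega : k ≤ 2 * (m + 1))]
    push_cast
    linear_combination hz

lemma S0_card : (S0 m).card = (2 * (m + 1) + 1) ^ m := by
  have : (S0 m).card = (Finset.univ : Finset (Fin m → ZMod (2 * (m + 1) + 1))).card := by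
    refine Finset.card_bij' (fun x _ => Fin.tail x)
      (fun f _ => Fin.cons (- tailsum m f) f) ?_ ?_ ?_ ?_
    · intro x _
      exact Finset.mem_univ _
    · intro f _
      simp only [S0, Finset.mem_filter, Finset.mem_univ, true_and]
      rw [wt_cons, neg_add_cancel]
    · intro x hx
      simp only [S0, Finset.mem_filter, Finset.mem_univ, true_and] at hx
      have h0 : wt m (Fin.cons (x 0) (Fin.tail x)) = x 0 + tailsum m (Fin.tail x) :=
        wt_cons m _ _
      rw [Fin.cons_self_tail, hx] at h0
      have hx0 : x 0 = - tailsum m (Fin.tail x) := eq_neg_of_add_eq_zero_left h0.symm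
      show Fin.cons (-tailsum m (Fin.tail x)) (Fin.tail x) = x
      rw [← hx0, Fin.cons_self_tail]
    · intro f _
      exact Fin.tail_cons _ _
  rw [this]
  simp [ZMod.card]

end aux3

/-- For every `n ≥ 1` (written `n = m + 1`), the domination number of
`Γ(ℤ_{2n+1}ⁿ, 𝒰)` is `(2n+1)^(n−1)`: it is the least cardinality of a dominating set. -/
theorem stmt2 (m : ℕ) :
    IsLeast {c : ℕ | ∃ S : Finset (Fin (m + 1) → ZMod (2 * (m + 1) + 1)),
        Dom (cay (m + 1)) ↑S ∧ S.card = c}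
      ((2 * (m + 1) + 1) ^ m) := by
  constructor
  · exact ⟨S0 m, S0_dom m, S0_card m⟩
  · rintro c ⟨S, hS, rfl⟩
    exact lower_bound m S hS
end

section
/- Let p = 2n+1 be a prime and let S be a perfect dominating set of Γ(ℤ_pⁿ, 𝒰). Then every axis-parallel line meets S in exactly one point: for every (x₁,…,xₙ) ∈ ℤ_pⁿ and every i ∈ {1,…,n}, |S ∩ {(y₁,…,yₙ) ∈ ℤ_pⁿ : yⱼ = xⱼ for all j ≠ i}| = 1. -/
open Finset Polynomial


section Phi
variable {p : ℕ}

noncomputable def phi (ζ : ℂ) (a : ZMod p) : ℂ := ζ ^ a.val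

lemma pow_val_mod (hp : 1 < p) (ζ : ℂ) (hζ : IsPrimitiveRoot ζ p) (m : ℕ) :
    ζ ^ m = ζ ^ (m % p) := by
  conv_lhs => rw [← Nat.div_add_mod m p]
  rw [pow_add, pow_mul, hζ.pow_eq_one, one_pow, one_mul]

lemma phi_add (hp : 1 < p) (ζ : ℂ) (hζ : IsPrimitiveRoot ζ p) (a b : ZMod p) :
    phi ζ (a + b) = phi ζ a * phi ζ b := by
  haveI : NeZero p := ⟨by omega⟩
  unfold phi
  rw [← pow_add]
  rw [pow_val_mod hp ζ hζ (a+b).val, pow_val_mod hp ζ hζ (a.val + b.val), ZMod.val_add]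
  simp [Nat.mod_mod_of_dvd]

lemma phi_zero (hp : 1 < p) (ζ : ℂ) : phi ζ (0 : ZMod p) = 1 := by
  haveI : NeZero p := ⟨by omega⟩
  simp [phi]

lemma phi_sum_eq_zero (hp : 1 < p) (ζ : ℂ) (hζ : IsPrimitiveRoot ζ p) :
    haveI : NeZero p := ⟨by omega⟩
    ∑ t : ZMod p, phi ζ t = 0 := by
  haveI : NeZero p := ⟨by omega⟩
  have h : ∑ t : ZMod p, phi ζ t = ∑ k : Fin p, ζ ^ (k : ℕ) := by
    apply Fintype.sum_bijective (fun t : ZMod p => (⟨t.val, ZMod.val_lt t⟩ : Fin p))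
    · constructor
      · intro a b hab
        have : a.val = b.val := by simpa using congrArg Fin.val hab
        exact ZMod.val_injective p this
      · intro k
        refine ⟨(k : ZMod p), ?_⟩
        ext
        simp [ZMod.val_natCast_of_lt k.isLt]
    · intro t; rfl
  rw [h, Fin.sum_univ_eq_sum_range]
  exact hζ.geom_sum_eq_zero hp

lemma phi_mul_sum_eq_zero (hp : p.Prime) (ζ : ℂ) (hζ : IsPrimitiveRoot ζ p)
    {w : ZMod p} (hw : w ≠ 0) :
    haveI : NeZero p := ⟨hp.ne_zero⟩
    ∑ t : ZMod p, phi ζ (t * w) = 0 := by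
  haveI : Fact p.Prime := ⟨hp⟩
  haveI : NeZero p := ⟨hp.ne_zero⟩
  have hwu : IsUnit w := isUnit_iff_ne_zero.mpr hw
  calc ∑ t : ZMod p, phi ζ (t * w)
      = ∑ t : ZMod p, phi ζ t := Fintype.sum_equiv (Equiv.mulRight₀ w hw) _ _ (by intro t; rfl)
    _ = 0 := phi_sum_eq_zero hp.one_lt ζ hζ

end Phi

section Key

lemma key_nonzero {p n : ℕ} (hp : p.Prime) (hpn : p = 2 * n + 1)
    (ζ : ℂ) (hζ : IsPrimitiveRoot ζ p)
    (A B : Fin n → ZMod p) (i : Fin n) (hA : A i = 0) (hB : B i = 0) :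
    (1 : ℂ) + ∑ j, (phi ζ (A j) + phi ζ (B j)) ≠ 0 := by
  haveI : Fact p.Prime := ⟨hp⟩
  haveI : NeZero p := ⟨hp.ne_zero⟩
  intro h
  set Q : ℚ[X] := (C 1 + ∑ j, (X ^ (A j).val + X ^ (B j).val)) - ∑ k ∈ range p, X ^ k with hQ
  have haev : aeval ζ Q = 0 := by
    rw [hQ]
    simp only [map_sub, map_add, map_sum, map_pow, aeval_X, aeval_C, map_one]
    rw [hζ.geom_sum_eq_zero hp.one_lt, sub_zero]
    simpa [phi] using h
  have hdvd : cyclotomic p ℚ ∣ Q := by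
    rw [cyclotomic_eq_minpoly_rat hζ hp.pos]
    exact minpoly.dvd ℚ ζ haev
  -- Q ≠ 0 via coeff 0
  have hc0 : Q.coeff 0 ≥ 1 := by
    rw [hQ]
    simp only [coeff_sub, coeff_add, coeff_C_zero, finset_sum_coeff, coeff_X_pow]
    have h1 : ∑ k ∈ range p, (if 0 = k then (1:ℚ) else 0) = 1 := by
      rw [Finset.sum_ite_eq (range p) 0 (fun _ => (1:ℚ))]
      simp [hp.pos]
    rw [h1]
    have h2 : (2:ℚ) ≤ ∑ j, ((if 0 = (A j).val then (1:ℚ) else 0) +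
        (if 0 = (B j).val then (1:ℚ) else 0)) := by
      have hterm : ((if 0 = (A i).val then (1:ℚ) else 0) +
          (if 0 = (B i).val then (1:ℚ) else 0)) = 2 := by
        rw [hA, hB]; simp; norm_num
      calc (2:ℚ) = (if 0 = (A i).val then (1:ℚ) else 0) +
          (if 0 = (B i).val then (1:ℚ) else 0) := hterm.symm
        _ ≤ _ := by
            apply Finset.single_le_sum (f := fun j => ((if 0 = (A j).val then (1:ℚ) else 0) +
              (if 0 = (B j).val then (1:ℚ) else 0))) _ (mem_univ i)
            intro j _
            positivity
    linarith
  have hQ0 : Q ≠ 0 := fun hz => by rw [hz] at hc0; simp at hc0; linarith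
  -- eval 1 Q = 0
  have hev1 : Q.eval 1 = 0 := by
    rw [hQ]
    simp only [eval_sub, eval_add, eval_C, eval_finset_sum, eval_pow, eval_X, one_pow]
    simp [hpn]
    ring
  -- factor
  obtain ⟨R, hR⟩ := hdvd
  have hR1 : R.eval 1 = 0 := by
    have := congrArg (Polynomial.eval 1) hR
    rw [hev1, eval_mul, eval_one_cyclotomic_prime] at this
    have hpne : (p : ℚ) ≠ 0 := by exact_mod_cast hp.ne_zero
    field_simp at this
    exact (mul_eq_zero.mp this.symm).resolve_left hpne
  have hXR : (X - C (1:ℚ)) ∣ R := dvd_iff_isRoot.mpr hR1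
  obtain ⟨R', hR'⟩ := hXR
  have hdvd2 : (cyclotomic p ℚ * (X - C 1)) ∣ Q := ⟨R', by rw [hR, hR']; ring⟩
  have hdegQ : Q.natDegree ≤ p - 1 := by
    rw [hQ]
    apply le_trans (natDegree_sub_le _ _)
    apply max_le
    · apply le_trans (natDegree_add_le _ _)
      apply max_le
      · simp
      · apply Polynomial.natDegree_sum_le_of_forall_le
        intro j _
        apply le_trans (natDegree_add_le _ _)
        apply max_le
        · rw [natDegree_X_pow]
          have := ZMod.val_lt (A j)
          omega
        · rw [natDegree_X_pow]
          have := ZMod.val_lt (B j)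
          omega
    · apply Polynomial.natDegree_sum_le_of_forall_le
      intro k hk
      rw [natDegree_X_pow]
      simp at hk
      omega
  have hdeg2 : (cyclotomic p ℚ * (X - C 1)).natDegree = p := by
    rw [natDegree_mul (cyclotomic_ne_zero p ℚ) (X_sub_C_ne_zero 1),
      natDegree_cyclotomic, natDegree_X_sub_C, Nat.totient_prime hp]
    have := hp.two_le
    omega
  have := Polynomial.natDegree_le_of_dvd hdvd2 hQ0
  rw [hdeg2] at this
  have := hp.two_le
  omega

end Key

section Main

open Classical in
noncomputable def fInd (n : ℕ) (S : Set (Fin n → ZMod (2*n+1))) (v : Fin n → ZMod (2*n+1)) : ℂ :=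
  if v ∈ S then 1 else 0

def offv (n : ℕ) : Option (Fin n × Bool) → (Fin n → ZMod (2*n+1))
  | none => 0
  | some (j, true) => Pi.single j 1
  | some (j, false) => -(Pi.single j 1)

noncomputable def tline (n : ℕ) (S : Set (Fin n → ZMod (2*n+1))) (i : Fin n)
    (v : Fin n → ZMod (2*n+1)) : ℂ :=
  ∑ s : ZMod (2*n+1), fInd n S (v + Pi.single i s)

noncomputable def chi (n : ℕ) (ζ : ℂ) (c v : Fin n → ZMod (2*n+1)) : ℂ :=
  phi ζ (∑ j, c j * v j)

variable {n : ℕ}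

lemma myone_ne_zero (hp : Nat.Prime (2*n+1)) : (1 : ZMod (2*n+1)) ≠ 0 := by
  haveI : Fact (1 < 2*n+1) := ⟨hp.one_lt⟩
  exact one_ne_zero

lemma myone_ne_neg_one (hp : Nat.Prime (2*n+1)) : (1 : ZMod (2*n+1)) ≠ -1 := by
  intro h
  have h2 : ((2:ℕ) : ZMod (2*n+1)) = 0 := by push_cast; linear_combination h
  rw [ZMod.natCast_eq_zero_iff] at h2
  have := Nat.le_of_dvd (by norm_num) h2
  have h3 := hp.two_le
  have hn : n ≠ 0 := by rintro rfl; exact Nat.not_prime_one (by simpa using hp)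
  omega

lemma single_ne_zero' (hp : Nat.Prime (2*n+1)) (j : Fin n) :
    (Pi.single j 1 : Fin n → ZMod (2*n+1)) ≠ 0 := by
  intro h
  have := congrFun h j
  simp at this
  exact myone_ne_zero hp this

lemma single_eq_single (hp : Nat.Prime (2*n+1)) {j k : Fin n}
    (h : (Pi.single j 1 : Fin n → ZMod (2*n+1)) = Pi.single k 1) : j = k := by
  by_contra hjk
  have := congrFun h j
  rw [Pi.single_eq_same, Pi.single_eq_of_ne hjk] at this
  exact myone_ne_zero hp this

lemma single_ne_neg (hp : Nat.Prime (2*n+1)) (j k : Fin n) :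
    (Pi.single j 1 : Fin n → ZMod (2*n+1)) ≠ -Pi.single k 1 := by
  intro h
  by_cases hjk : j = k
  · subst hjk
    have := congrFun h j
    rw [Pi.single_eq_same, Pi.neg_apply, Pi.single_eq_same] at this
    exact myone_ne_neg_one hp this
  · have := congrFun h j
    rw [Pi.single_eq_same, Pi.neg_apply, Pi.single_eq_of_ne hjk] at this
    simp at this
    exact myone_ne_zero hp this

lemma offv_inj (hp : Nat.Prime (2*n+1)) : Function.Injective (offv n) := by
  rintro (_ | ⟨j, bj⟩) (_ | ⟨k, bk⟩) h
  · rfl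
  · exfalso; cases bk <;> simp only [offv] at h
    · exact single_ne_zero' hp k (by rw [← neg_eq_zero]; exact h.symm)
    · exact single_ne_zero' hp k h.symm
  · exfalso; cases bj <;> simp only [offv] at h
    · exact single_ne_zero' hp j (by rw [← neg_eq_zero]; exact h)
    · exact single_ne_zero' hp j h
  · cases bj <;> cases bk <;> simp only [offv] at h
    · rw [neg_inj] at h; rw [single_eq_single hp h]
    · exact absurd h.symm (single_ne_neg hp k j)
    · exact absurd h (single_ne_neg hp j k)
    · rw [single_eq_single hp h]

lemma dom_param (u v : Fin n → ZMod (2*n+1)) :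
    (u = v ∨ (cay n).Adj u v) ↔ ∃ o, u = v + offv n o := by
  constructor
  · rintro (rfl | ⟨j, hj | hj⟩)
    · exact ⟨none, by simp [offv]⟩
    · exact ⟨some (j, true), by rw [offv]; linear_combination hj⟩
    · exact ⟨some (j, false), by rw [offv]; linear_combination -hj⟩
  · rintro ⟨(_ | ⟨j, bj⟩), rfl⟩
    · left; simp [offv]
    · cases bj
      · right; exact ⟨j, Or.inr (by rw [offv]; ring)⟩
      · right; exact ⟨j, Or.inl (by rw [offv]; ring)⟩

lemma dom_one (hp : Nat.Prime (2*n+1)) {S : Set (Fin n → ZMod (2*n+1))}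
    (hS : PerfDom (cay n) S) (v : Fin n → ZMod (2*n+1)) :
    ∑ o : Option (Fin n × Bool), fInd n S (v + offv n o) = 1 := by
  classical
  obtain ⟨u0, ⟨hu0S, hu0d⟩, huniq⟩ := hS v
  obtain ⟨o0, ho0⟩ := (dom_param u0 v).mp hu0d
  have hstep : ∀ o, fInd n S (v + offv n o) = if o = o0 then 1 else 0 := by
    intro o
    unfold fInd
    split_ifs with h1 h2 h2
    · rfl
    · exfalso; apply h2
      have h3 : v + offv n o = u0 :=
        huniq _ ⟨h1, (dom_param _ v).mpr ⟨o, rfl⟩⟩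
      rw [ho0] at h3
      exact offv_inj hp (add_right_injective v h3)
    · exfalso; apply h1; subst h2; rw [← ho0]; exact hu0S
    · rfl
  rw [Finset.sum_congr rfl (fun o _ => hstep o)]
  simp

lemma star_eq (hp : Nat.Prime (2*n+1)) {S : Set (Fin n → ZMod (2*n+1))}
    (hS : PerfDom (cay n) S) (i : Fin n) (v : Fin n → ZMod (2*n+1)) :
    ∑ o : Option (Fin n × Bool), tline n S i (v + offv n o) = (2*n+1 : ℂ) := by
  unfold tline
  rw [Finset.sum_comm]
  have h : ∀ s : ZMod (2*n+1), ∑ o : Option (Fin n × Bool),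
      fInd n S (v + offv n o + Pi.single i s) = 1 := by
    intro s
    have h0 := dom_one hp hS (v + Pi.single i s)
    rw [← h0]
    apply Finset.sum_congr rfl
    intro o _
    congr 1
    abel
  rw [Finset.sum_congr rfl (fun s _ => h s)]
  simp [ZMod.card]

lemma tline_shift {S : Set (Fin n → ZMod (2*n+1))} (i : Fin n)
    (v : Fin n → ZMod (2*n+1)) (s : ZMod (2*n+1)) :
    tline n S i (v + Pi.single i s) = tline n S i v := by
  unfold tline
  have h : ∀ x : ZMod (2*n+1), fInd n S (v + Pi.single i s + Pi.single i x)
      = fInd n S (v + Pi.single i (s + x)) := by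
    intro x
    congr 1
    rw [Pi.single_add]
    abel
  rw [Finset.sum_congr rfl (fun x _ => h x)]
  exact Fintype.sum_equiv (Equiv.addLeft s) _ _ (fun x => rfl)

end Main

section Char
variable {n : ℕ}

lemma phi_sum {p : ℕ} (hp : 1 < p) (ζ : ℂ) (hζ : IsPrimitiveRoot ζ p)
    {α : Type*} (s : Finset α) (g : α → ZMod p) :
    phi ζ (∑ j ∈ s, g j) = ∏ j ∈ s, phi ζ (g j) := by
  induction s using Finset.cons_induction with
  | empty => simpa using phi_zero hp ζ
  | cons a s ha ih => rw [Finset.sum_cons, Finset.prod_cons, phi_add hp ζ hζ, ih]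

lemma chi_add (hp : Nat.Prime (2*n+1)) (ζ : ℂ) (hζ : IsPrimitiveRoot ζ (2*n+1))
    (c u w : Fin n → ZMod (2*n+1)) :
    chi n ζ c (u + w) = chi n ζ c u * chi n ζ c w := by
  unfold chi
  rw [← phi_add hp.one_lt ζ hζ, ← Finset.sum_add_distrib]
  congr 1
  apply Finset.sum_congr rfl
  intro j _
  simp [Pi.add_apply]
  ring

lemma chi_zero_left (hp : Nat.Prime (2*n+1)) (ζ : ℂ) (v : Fin n → ZMod (2*n+1)) :
    chi n ζ 0 v = 1 := by
  unfold chi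
  simpa using phi_zero hp.one_lt ζ

lemma sum_t_phi_mul {p : ℕ} (hp : p.Prime) (ζ : ℂ) (hζ : IsPrimitiveRoot ζ p) (w : ZMod p) :
    haveI : NeZero p := ⟨hp.ne_zero⟩
    ∑ t : ZMod p, phi ζ (t * w) = if w = 0 then (p:ℂ) else 0 := by
  haveI : NeZero p := ⟨hp.ne_zero⟩
  by_cases hw : w = 0
  · subst hw
    simp only [mul_zero, if_pos rfl]
    rw [Finset.sum_congr rfl (fun t _ => phi_zero hp.one_lt ζ)]
    simp [ZMod.card]
  · rw [if_neg hw]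
    exact phi_mul_sum_eq_zero hp ζ hζ hw

lemma chi_prod (hp : Nat.Prime (2*n+1)) (ζ : ℂ) (hζ : IsPrimitiveRoot ζ (2*n+1))
    (c v : Fin n → ZMod (2*n+1)) :
    chi n ζ c v = ∏ j, phi ζ (c j * v j) :=
  phi_sum hp.one_lt ζ hζ Finset.univ _

lemma sum_v_chi (hp : Nat.Prime (2*n+1)) (ζ : ℂ) (hζ : IsPrimitiveRoot ζ (2*n+1))
    {c : Fin n → ZMod (2*n+1)} (hc : c ≠ 0) :
    ∑ v : Fin n → ZMod (2*n+1), chi n ζ c v = 0 := by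
  rw [Finset.sum_congr rfl (fun v _ => chi_prod hp ζ hζ c v)]
  rw [← Fintype.piFinset_univ,
    Finset.sum_prod_piFinset Finset.univ (fun j y => phi ζ (c j * y))]
  obtain ⟨j0, hj0⟩ := Function.ne_iff.mp hc
  apply Finset.prod_eq_zero (Finset.mem_univ j0)
  have hre : ∑ t : ZMod (2*n+1), phi ζ (c j0 * t)
      = ∑ t : ZMod (2*n+1), phi ζ (t * c j0) :=
    Finset.sum_congr rfl (fun t _ => congrArg (phi ζ) (mul_comm _ _))
  rw [hre]
  exact phi_mul_sum_eq_zero hp ζ hζ (by simpa using hj0)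

lemma sum_c_chi (hp : Nat.Prime (2*n+1)) (ζ : ℂ) (hζ : IsPrimitiveRoot ζ (2*n+1))
    (w : Fin n → ZMod (2*n+1)) :
    ∑ c : Fin n → ZMod (2*n+1), chi n ζ c w
      = if w = 0 then ((2*n+1 : ℕ):ℂ)^n else 0 := by
  rw [Finset.sum_congr rfl (fun c _ => chi_prod hp ζ hζ c w)]
  rw [← Fintype.piFinset_univ,
    Finset.sum_prod_piFinset Finset.univ (fun j y => phi ζ (y * w j))]
  by_cases hw : w = 0
  · subst hw
    rw [if_pos rfl]
    have h : ∀ j : Fin n, ∑ t : ZMod (2*n+1), phi ζ (t * (0 : Fin n → ZMod (2*n+1)) j)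
        = ((2*n+1:ℕ):ℂ) := by
      intro j
      rw [sum_t_phi_mul hp ζ hζ]
      simp
    rw [Finset.prod_congr rfl (fun j _ => h j)]
    simp
  · rw [if_neg hw]
    obtain ⟨j0, hj0⟩ := Function.ne_iff.mp hw
    apply Finset.prod_eq_zero (Finset.mem_univ j0)
    rw [sum_t_phi_mul hp ζ hζ]
    simp only [Pi.zero_apply] at hj0
    rw [if_neg hj0]

end Char

section Fourier
variable {n : ℕ}

noncomputable def mhat (n : ℕ) (ζ : ℂ) (S : Set (Fin n → ZMod (2*n+1))) (i : Fin n)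
    (c : Fin n → ZMod (2*n+1)) : ℂ :=
  ∑ v : Fin n → ZMod (2*n+1), tline n S i v * chi n ζ c v

lemma chi_single (hp : Nat.Prime (2*n+1)) (ζ : ℂ) (c : Fin n → ZMod (2*n+1))
    (j : Fin n) (s : ZMod (2*n+1)) :
    chi n ζ c (Pi.single j s) = phi ζ (c j * s) := by
  unfold chi
  congr 1
  rw [Finset.sum_eq_single j]
  · rw [Pi.single_eq_same]
  · intro k _ hk
    rw [Pi.single_eq_of_ne hk, mul_zero]
  · intro h; exact absurd (Finset.mem_univ j) h

lemma chi_apply_zero (hp : Nat.Prime (2*n+1)) (ζ : ℂ) (c : Fin n → ZMod (2*n+1)) :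
    chi n ζ c 0 = 1 := by
  unfold chi
  simpa using phi_zero hp.one_lt ζ

lemma mhat_eq_zero_of_ci_ne (hp : Nat.Prime (2*n+1)) (ζ : ℂ)
    (hζ : IsPrimitiveRoot ζ (2*n+1)) (S : Set (Fin n → ZMod (2*n+1))) (i : Fin n)
    {c : Fin n → ZMod (2*n+1)} (hci : c i ≠ 0) :
    mhat n ζ S i c = 0 := by
  have key : mhat n ζ S i c = phi ζ (c i) * mhat n ζ S i c := by
    have e1 : ∑ v : Fin n → ZMod (2*n+1),
        tline n S i (v + Pi.single i 1) * chi n ζ c (v + Pi.single i 1)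
          = mhat n ζ S i c :=
      Fintype.sum_equiv (Equiv.addRight (Pi.single i 1))
        (fun v => tline n S i (v + Pi.single i 1) * chi n ζ c (v + Pi.single i 1))
        (fun v => tline n S i v * chi n ζ c v) (fun v => rfl)
    have e2 : ∑ v : Fin n → ZMod (2*n+1),
        tline n S i (v + Pi.single i 1) * chi n ζ c (v + Pi.single i 1)
          = phi ζ (c i) * mhat n ζ S i c := by
      rw [mhat, Finset.mul_sum]
      apply Finset.sum_congr rfl
      intro v _
      rw [tline_shift i v 1, chi_add hp ζ hζ, chi_single hp ζ, mul_one]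
      ring
    exact e1.symm.trans e2
  have hphi : phi ζ (c i) ≠ 1 := by
    haveI : NeZero (2*n+1) := ⟨by omega⟩
    unfold phi
    apply hζ.pow_ne_one_of_pos_of_lt
    · have hv : (c i).val ≠ 0 := by
        intro h; apply hci; rwa [← ZMod.val_eq_zero]
      omega
    · exact ZMod.val_lt _
  have h2 : (1 - phi ζ (c i)) * mhat n ζ S i c = 0 := by linear_combination key
  rcases mul_eq_zero.mp h2 with h | h
  · exact absurd (by linear_combination -h) hphi
  · exact h

lemma mhat_eq_zero_of_ci_eq (hp : Nat.Prime (2*n+1)) (ζ : ℂ)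
    (hζ : IsPrimitiveRoot ζ (2*n+1)) {S : Set (Fin n → ZMod (2*n+1))}
    (hS : PerfDom (cay n) S) (i : Fin n)
    {c : Fin n → ZMod (2*n+1)} (hc : c ≠ 0) (hci : c i = 0) :
    mhat n ζ S i c = 0 := by
  set K : ℂ := ∑ o : Option (Fin n × Bool), chi n ζ c (-(offv n o)) with hK
  have h1 : K * mhat n ζ S i c = 0 := by
    have lhs_eq : ∀ o : Option (Fin n × Bool),
        ∑ v : Fin n → ZMod (2*n+1), tline n S i (v + offv n o) * chi n ζ c v
          = chi n ζ c (-(offv n o)) * mhat n ζ S i c := by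
      intro o
      have e1 : ∑ v : Fin n → ZMod (2*n+1), tline n S i (v + offv n o) * chi n ζ c v
          = ∑ u : Fin n → ZMod (2*n+1), tline n S i u * chi n ζ c (u - offv n o) :=
        Fintype.sum_equiv (Equiv.addRight (offv n o))
          (fun v => tline n S i (v + offv n o) * chi n ζ c v)
          (fun u => tline n S i u * chi n ζ c (u - offv n o)) (fun v => by simp)
      rw [e1, mhat, Finset.mul_sum]
      apply Finset.sum_congr rfl
      intro v _
      rw [sub_eq_add_neg, chi_add hp ζ hζ]
      ring
    have h2 : ∑ v : Fin n → ZMod (2*n+1),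
        (∑ o : Option (Fin n × Bool), tline n S i (v + offv n o)) * chi n ζ c v = 0 := by
      have : ∀ v : Fin n → ZMod (2*n+1),
          (∑ o : Option (Fin n × Bool), tline n S i (v + offv n o)) * chi n ζ c v
            = (2*n+1 : ℂ) * chi n ζ c v := by
        intro v; rw [star_eq hp hS i v]
      rw [Finset.sum_congr rfl (fun v _ => this v), ← Finset.mul_sum,
        sum_v_chi hp ζ hζ hc, mul_zero]
    calc K * mhat n ζ S i c
        = ∑ o : Option (Fin n × Bool), chi n ζ c (-(offv n o)) * mhat n ζ S i c := by
          rw [hK, Finset.sum_mul]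
      _ = ∑ o : Option (Fin n × Bool), ∑ v : Fin n → ZMod (2*n+1),
            tline n S i (v + offv n o) * chi n ζ c v :=
          Finset.sum_congr rfl (fun o _ => (lhs_eq o).symm)
      _ = ∑ v : Fin n → ZMod (2*n+1), ∑ o : Option (Fin n × Bool),
            tline n S i (v + offv n o) * chi n ζ c v := Finset.sum_comm
      _ = ∑ v : Fin n → ZMod (2*n+1),
            (∑ o : Option (Fin n × Bool), tline n S i (v + offv n o)) * chi n ζ c v :=
          Finset.sum_congr rfl (fun v _ => (Finset.sum_mul _ _ _).symm)
      _ = 0 := h2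
  have hKval : K = 1 + ∑ j, (phi ζ (c j) + phi ζ ((-c) j)) := by
    rw [hK, Fintype.sum_option]
    congr 1
    · rw [show -(offv n none) = (0 : Fin n → ZMod (2*n+1)) by simp [offv],
        chi_apply_zero hp]
    · rw [Fintype.sum_prod_type]
      apply Finset.sum_congr rfl
      intro j _
      rw [Fintype.sum_bool]
      have ht : -(offv n (some (j, true))) = Pi.single j (-1 : ZMod (2*n+1)) := by
        rw [offv]; ext k; by_cases hk : k = j
        · subst hk; simp
        · simp [Pi.single_eq_of_ne hk]
      have hf : -(offv n (some (j, false))) = Pi.single j (1 : ZMod (2*n+1)) := by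
        rw [offv]; simp
      rw [ht, hf, chi_single hp, chi_single hp]
      rw [mul_neg_one, mul_one]
      rw [add_comm]
      simp
  have hKne : K ≠ 0 := by
    rw [hKval]
    exact key_nonzero hp rfl ζ hζ c (-c) i hci (by simp [hci])
  rcases mul_eq_zero.mp h1 with h | h
  · exact absurd h hKne
  · exact h

lemma mhat_zero (hp : Nat.Prime (2*n+1)) (ζ : ℂ)
    {S : Set (Fin n → ZMod (2*n+1))} (hS : PerfDom (cay n) S) (i : Fin n) :
    mhat n ζ S i 0 = ((2*n+1 : ℕ) : ℂ)^n := by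
  unfold mhat
  have h1 : ∀ v : Fin n → ZMod (2*n+1),
      tline n S i v * chi n ζ 0 v = tline n S i v := by
    intro v; rw [chi_zero_left hp, mul_one]
  rw [Finset.sum_congr rfl (fun v _ => h1 v)]
  -- ∑ v, tline = (2n+1) * F where F = ∑ v, fInd
  set F : ℂ := ∑ v : Fin n → ZMod (2*n+1), fInd n S v with hF
  have h2 : ∑ v : Fin n → ZMod (2*n+1), tline n S i v = ((2*n+1:ℕ) : ℂ) * F := by
    unfold tline
    rw [Finset.sum_comm]
    have h3 : ∀ s : ZMod (2*n+1),
        ∑ v : Fin n → ZMod (2*n+1), fInd n S (v + Pi.single i s) = F := by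
      intro s
      exact Fintype.sum_equiv (Equiv.addRight (Pi.single i s))
        (fun v => fInd n S (v + Pi.single i s)) (fun v => fInd n S v) (fun v => rfl)
    rw [Finset.sum_congr rfl (fun s _ => h3 s)]
    simp [ZMod.card]
  have h4 : ((2*n+1:ℕ) : ℂ) * F = ((2*n+1:ℕ) : ℂ)^n := by
    have h5 : ∑ v : Fin n → ZMod (2*n+1),
        (∑ o : Option (Fin n × Bool), fInd n S (v + offv n o)) = ((2*n+1:ℕ):ℂ)^n := by
      rw [Finset.sum_congr rfl (fun v _ => dom_one hp hS v)]
      simp [Fintype.card_fun, ZMod.card]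
    rw [← h5, Finset.sum_comm]
    have h6 : ∀ o : Option (Fin n × Bool),
        ∑ v : Fin n → ZMod (2*n+1), fInd n S (v + offv n o) = F := by
      intro o
      exact Fintype.sum_equiv (Equiv.addRight (offv n o))
        (fun v => fInd n S (v + offv n o)) (fun v => fInd n S v) (fun v => rfl)
    rw [Finset.sum_congr rfl (fun o _ => h6 o)]
    rw [Finset.sum_const]
    simp only [Finset.card_univ, Fintype.card_option, Fintype.card_prod,
      Fintype.card_fin, Fintype.card_bool, nsmul_eq_mul]
    push_cast
    ring
  rw [h2, h4]

lemma tline_eq_one (hp : Nat.Prime (2*n+1)) {S : Set (Fin n → ZMod (2*n+1))}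
    (hS : PerfDom (cay n) S) (i : Fin n) (x : Fin n → ZMod (2*n+1)) :
    tline n S i x = 1 := by
  obtain ⟨ζ, hζ⟩ : ∃ ζ : ℂ, IsPrimitiveRoot ζ (2*n+1) :=
    ⟨_, Complex.isPrimitiveRoot_exp (2*n+1) (by omega)⟩
  have way1 : ∑ c : Fin n → ZMod (2*n+1), mhat n ζ S i c * chi n ζ c (-x)
      = ((2*n+1:ℕ):ℂ)^n := by
    rw [Finset.sum_eq_single 0]
    · rw [mhat_zero hp ζ hS i, chi_zero_left hp, mul_one]
    · intro c _ hc
      by_cases hci : c i = 0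
      · rw [mhat_eq_zero_of_ci_eq hp ζ hζ hS i hc hci, zero_mul]
      · rw [mhat_eq_zero_of_ci_ne hp ζ hζ S i hci, zero_mul]
    · intro h; exact absurd (Finset.mem_univ 0) h
  have way2 : ∑ c : Fin n → ZMod (2*n+1), mhat n ζ S i c * chi n ζ c (-x)
      = tline n S i x * ((2*n+1:ℕ):ℂ)^n := by
    unfold mhat
    have hsw : ∑ c : Fin n → ZMod (2*n+1),
        (∑ v : Fin n → ZMod (2*n+1), tline n S i v * chi n ζ c v) * chi n ζ c (-x)
          = ∑ v : Fin n → ZMod (2*n+1),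
            tline n S i v * ∑ c : Fin n → ZMod (2*n+1), chi n ζ c (v + -x) := by
      have hstep : ∀ c : Fin n → ZMod (2*n+1),
          (∑ v : Fin n → ZMod (2*n+1), tline n S i v * chi n ζ c v) * chi n ζ c (-x)
            = ∑ v : Fin n → ZMod (2*n+1), tline n S i v * chi n ζ c (v + -x) := by
        intro c
        rw [Finset.sum_mul]
        apply Finset.sum_congr rfl
        intro v _
        rw [chi_add hp ζ hζ]
        ring
      rw [Finset.sum_congr rfl (fun c _ => hstep c), Finset.sum_comm]
      apply Finset.sum_congr rfl
      intro v _
      rw [Finset.mul_sum]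
    rw [hsw]
    rw [Finset.sum_eq_single x]
    · rw [sum_c_chi hp ζ hζ, if_pos (by simp)]
    · intro v _ hv
      rw [sum_c_chi hp ζ hζ, if_neg, mul_zero]
      intro h
      apply hv
      have := congrArg (· + x) h
      simpa using this
    · intro h; exact absurd (Finset.mem_univ x) h
  have hpn : ((2*n+1:ℕ):ℂ)^n ≠ 0 := by
    apply pow_ne_zero
    exact_mod_cast (by omega : (2*n+1:ℕ) ≠ 0)
  have h := way2.symm.trans way1
  apply mul_right_cancel₀ hpn
  rw [h, one_mul]

end Fourier

/-- If `p = 2n+1` is prime and `S` is a perfect dominating set of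
`Γ(ℤ_pⁿ, 𝒰)`, then every axis-parallel line meets `S` in exactly one point. -/
theorem stmt4 (n : ℕ) (hp : Nat.Prime (2 * n + 1))
    (S : Set (Fin n → ZMod (2 * n + 1))) (hS : PerfDom (cay n) S)
    (x : Fin n → ZMod (2 * n + 1)) (i : Fin n) :
    (S ∩ {y : Fin n → ZMod (2 * n + 1) | ∀ j, j ≠ i → y j = x j}).ncard = 1 := by
  classical
  set F : Finset (Fin n → ZMod (2*n+1)) :=
    Finset.univ.filter (fun y => y ∈ S ∧ ∀ j, j ≠ i → y j = x j) with hF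
  have hset : S ∩ {y : Fin n → ZMod (2 * n + 1) | ∀ j, j ≠ i → y j = x j} = ↑F := by
    ext y
    simp [hF, Set.mem_inter_iff]
  rw [hset, Set.ncard_coe_finset]
  -- relate F.card to tline
  have htl := tline_eq_one hp hS i x
  have hcard : ((F.card : ℂ)) = tline n S i x := by
    unfold tline fInd
    rw [Finset.sum_boole]
    congr 1
    apply Finset.card_nbij' (fun y => y i - x i) (fun s => x + Pi.single i s)
    · intro y hy
      simp only [Finset.mem_coe, hF, Finset.mem_filter, Finset.mem_univ, true_and] at hy
      simp only [Finset.mem_coe, Finset.mem_filter, Finset.mem_univ, true_and]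
      have hxy : x + Pi.single i (y i - x i) = y := by
        funext j
        by_cases hj : j = i
        · subst hj; simp
        · simp [Pi.single_eq_of_ne hj, (hy.2 j hj).symm]
      rw [hxy]
      exact hy.1
    · intro s hs
      rw [Finset.mem_coe] at hs
      simp only [Finset.mem_coe, hF, Finset.mem_filter, Finset.mem_univ, true_and]
      constructor
      · simpa using (Finset.mem_filter.mp hs).2
      · intro j hj
        simp [Pi.single_eq_of_ne hj]
    · intro y hy
      simp only [Finset.mem_coe, hF, Finset.mem_filter, Finset.mem_univ, true_and] at hy
      funext j
      by_cases hj : j = i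
      · subst hj; simp
      · simp [Pi.single_eq_of_ne hj, (hy.2 j hj).symm]
    · intro s hs
      simp
  rw [htl] at hcard
  exact_mod_cast hcard
end

section
/- Let p = 2n+1 be prime. The span (over ℂ) of the characteristic vectors of all perfect dominating sets of Γ(ℤ_pⁿ, 𝒰) has dimension at most 1 + n!·2ⁿ. -/
open Finset Polynomial

namespace Stmt9

noncomputable section

variable (n : ℕ)

abbrev G (n : ℕ) := Fin n → ZMod (2 * n + 1)

def ζ : ℂ := Complex.exp (2 * Real.pi * Complex.I / ((2 * n + 1 : ℕ) : ℂ))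

lemma zprim : IsPrimitiveRoot (ζ n) (2 * n + 1) :=
  Complex.isPrimitiveRoot_exp _ (by omega)

def ec (t : ZMod (2 * n + 1)) : ℂ := ζ n ^ t.val

lemma zpow_mod (k : ℕ) : ζ n ^ (k % (2 * n + 1)) = ζ n ^ k := by
  conv_rhs => rw [← Nat.div_add_mod k (2 * n + 1)]
  rw [pow_add, pow_mul, (zprim n).pow_eq_one, one_pow, one_mul]

lemma ec_natCast (k : ℕ) : ec n (k : ZMod (2 * n + 1)) = ζ n ^ k := by
  rw [ec, ZMod.val_natCast, zpow_mod]

lemma ec_zero : ec n 0 = 1 := by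
  simp [ec, ZMod.val_zero]

lemma ec_add (s t : ZMod (2 * n + 1)) : ec n (s + t) = ec n s * ec n t := by
  rw [ec, ec, ec, ZMod.val_add, zpow_mod, pow_add]

lemma ec_sum {ι : Type*} (s : Finset ι) (f : ι → ZMod (2 * n + 1)) :
    ec n (∑ i ∈ s, f i) = ∏ i ∈ s, ec n (f i) := by
  classical
  induction s using Finset.cons_induction with
  | empty => simp [ec_zero]
  | cons a s ha ih => rw [Finset.sum_cons, Finset.prod_cons, ec_add, ih]

lemma zmod_sum {M : Type*} [AddCommMonoid M] (f : ZMod (2 * n + 1) → M) :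
    ∑ t : ZMod (2 * n + 1), f t = ∑ k ∈ range (2 * n + 1), f (k : ZMod (2 * n + 1)) := by
  exact Finset.sum_nbij' (fun t => t.val) (fun k => (k : ZMod (2 * n + 1)))
    (fun a _ => Finset.mem_range.mpr (ZMod.val_lt a))
    (fun a _ => Finset.mem_univ _)
    (fun a _ => by simp [ZMod.natCast_val, ZMod.cast_id])
    (fun a ha => ZMod.val_cast_of_lt (Finset.mem_range.mp ha))
    (fun a _ => by simp [ZMod.natCast_val, ZMod.cast_id])

lemma sum_ec (hn : n ≠ 0) : ∑ c : ZMod (2 * n + 1), ec n c = 0 := by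
  rw [zmod_sum]
  have h := (zprim n).geom_sum_eq_zero (by omega)
  rw [← h]
  exact Finset.sum_congr rfl fun k _ => ec_natCast n k

lemma sum_ec_mul (hp : Fact (Nat.Prime (2 * n + 1))) (b : ZMod (2 * n + 1)) (hb : b ≠ 0) :
    ∑ c : ZMod (2 * n + 1), ec n (b * c) = 0 := by
  have hn : n ≠ 0 := by
    rintro rfl
    have hv : b.val < 2 * 0 + 1 := ZMod.val_lt b
    have : b.val = 0 := by omega
    exact hb ((ZMod.val_eq_zero b).mp this)
  rw [Fintype.sum_equiv (Equiv.mulLeft₀ b hb) (fun c => ec n (b * c)) (ec n) (fun c => rfl)]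
  exact sum_ec n hn

def psi (a x : G n) : ℂ := ec n (∑ i, a i * x i)

lemma psi_comm (a x : G n) : psi n a x = psi n x a := by
  simp [psi, mul_comm]

lemma psi_add_right (a x y : G n) : psi n a (x + y) = psi n a x * psi n a y := by
  simp only [psi, Pi.add_apply, mul_add, Finset.sum_add_distrib, ec_add]

lemma sum_psi (hp : Fact (Nat.Prime (2 * n + 1))) (b : G n) :
    ∑ x : G n, psi n b x = if b = 0 then ((2 * n + 1 : ℕ) : ℂ) ^ n else 0 := by
  classical
  have h1 : ∀ x : G n, psi n b x = ∏ i, ec n (b i * x i) := fun x => ec_sum n univ _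
  simp only [h1]
  rw [← Fintype.prod_sum (fun i c => ec n (b i * c))]
  split_ifs with hb
  · subst hb
    simp [ec_zero, ZMod.card]
  · obtain ⟨i0, hi0⟩ : ∃ i, b i ≠ 0 := by
      by_contra h
      push_neg at h
      exact hb (funext h)
    exact Finset.prod_eq_zero (Finset.mem_univ i0) (sum_ec_mul n hp _ hi0)

def dft (f : G n → ℂ) (a : G n) : ℂ := ∑ x, f x * psi n a x

lemma dot_single (a : G n) (i : Fin n) :
    ∑ j, a j * (Pi.single i 1 : G n) j = a i := by
  simp [Pi.single_apply, mul_ite, Finset.sum_ite_eq']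

lemma psi_single (a : G n) (i : Fin n) : psi n a (Pi.single i 1) = ec n (a i) := by
  rw [psi, dot_single]

lemma psi_neg_single (a : G n) (i : Fin n) :
    psi n a (-(Pi.single i 1)) = ec n (-(a i)) := by
  rw [psi]
  congr 1
  rw [← dot_single n a i, ← Finset.sum_neg_distrib]
  exact Finset.sum_congr rfl fun j _ => by rw [Pi.neg_apply, mul_neg]

def Nop (f : G n → ℂ) (x : G n) : ℂ :=
  f x + ∑ i, (f (x - Pi.single i 1) + f (x + Pi.single i 1))

def lam (a : G n) : ℂ := 1 + ∑ i, (ec n (a i) + ec n (-(a i)))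

lemma psi_zero_right (a : G n) : psi n a 0 = 1 := by
  simp [psi, ec_zero]

lemma dft_shift (f : G n → ℂ) (a v : G n) :
    ∑ x, f (x + v) * psi n a x = psi n a (-v) * dft n f a := by
  rw [dft, Finset.mul_sum]
  refine Fintype.sum_equiv (Equiv.addRight v) _ _ fun x => ?_
  simp only [Equiv.coe_addRight]
  have hid : psi n a (-v) * psi n a v = 1 := by
    rw [← psi_add_right, neg_add_cancel, psi_zero_right]
  rw [psi_add_right]
  linear_combination (-(f (x + v) * psi n a x)) * hid

lemma dft_Nop (f : G n → ℂ) (a : G n) :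
    dft n (Nop n f) a = lam n a * dft n f a := by
  classical
  have step : ∀ x, Nop n f x * psi n a x
      = f x * psi n a x + ∑ i, ((f (x - Pi.single i 1)) * psi n a x
        + (f (x + Pi.single i 1)) * psi n a x) := by
    intro x
    rw [Nop, add_mul, Finset.sum_mul]
    congr 1
    exact Finset.sum_congr rfl fun i _ => add_mul _ _ _
  rw [dft]
  simp only [step]
  rw [Finset.sum_add_distrib, Finset.sum_comm]
  have inner : ∀ i : Fin n,
      ∑ x, (f (x - Pi.single i 1) * psi n a x + f (x + Pi.single i 1) * psi n a x)
        = (ec n (a i) + ec n (-(a i))) * dft n f a := by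
    intro i
    rw [Finset.sum_add_distrib]
    have e1 : ∑ x, f (x - Pi.single i 1) * psi n a x
        = ec n (a i) * dft n f a := by
      have := dft_shift n f a (-(Pi.single i 1))
      simp only [sub_eq_add_neg, neg_neg] at this ⊢
      rw [this, psi_single]
    have e2 : ∑ x, f (x + Pi.single i 1) * psi n a x
        = ec n (-(a i)) * dft n f a := by
      rw [dft_shift n f a (Pi.single i 1), psi_neg_single]
    rw [e1, e2, add_mul]
  rw [Finset.sum_congr rfl fun i _ => inner i, lam, add_mul, one_mul, Finset.sum_mul, dft]

lemma dft_eq_zero (hp : Fact (Nat.Prime (2 * n + 1))) {f : G n → ℂ}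
    (h : ∀ a, dft n f a = 0) : f = 0 := by
  classical
  funext y
  have key : ∑ a, dft n f a * psi n a (-y) = f y * ((2 * n + 1 : ℕ) : ℂ) ^ n := by
    calc ∑ a, dft n f a * psi n a (-y)
        = ∑ a, ∑ x, f x * psi n a (x - y) := by
          refine Finset.sum_congr rfl fun a _ => ?_
          rw [dft, Finset.sum_mul]
          refine Finset.sum_congr rfl fun x _ => ?_
          rw [sub_eq_add_neg, psi_add_right]
          ring
      _ = ∑ x, f x * ∑ a, psi n (x - y) a := by
          rw [Finset.sum_comm]
          refine Finset.sum_congr rfl fun x _ => ?_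
          rw [Finset.mul_sum]
          exact Finset.sum_congr rfl fun a _ => by rw [psi_comm]
      _ = ∑ x, f x * (if x - y = 0 then ((2 * n + 1 : ℕ) : ℂ) ^ n else 0) := by
          exact Finset.sum_congr rfl fun x _ => by rw [sum_psi n hp]
      _ = f y * ((2 * n + 1 : ℕ) : ℂ) ^ n := by
          simp only [sub_eq_zero, mul_ite, mul_zero]
          rw [Finset.sum_ite_eq' Finset.univ y (fun x => f x * ((2 * n + 1 : ℕ) : ℂ) ^ n)]
          simp
  rw [Finset.sum_eq_zero (fun a _ => by rw [h a, zero_mul])] at key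
  have hc : ((2 * n + 1 : ℕ) : ℂ) ^ n ≠ 0 :=
    pow_ne_zero _ (Nat.cast_ne_zero.mpr (by omega))
  have := key.symm
  rcases mul_eq_zero.mp this with h1 | h1
  · simpa using h1
  · exact absurd h1 hc

open Polynomial in
lemma mult_one (hp : Fact (Nat.Prime (2 * n + 1))) (a : G n) (ha : lam n a = 0)
    (t : ZMod (2 * n + 1)) :
    ((if t = 0 then 1 else 0)
      + (Finset.univ.filter fun i => a i = t).card
      + (Finset.univ.filter fun i => -(a i) = t).card : ℕ) = 1 := by
  classical
  set m : ZMod (2 * n + 1) → ℕ := fun t =>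
    (if t = 0 then 1 else 0)
      + (Finset.univ.filter fun i => a i = t).card
      + (Finset.univ.filter fun i => -(a i) = t).card with hm
  -- total mass
  have hcard1 : ∀ g : Fin n → ZMod (2 * n + 1),
      ∑ t : ZMod (2 * n + 1), (Finset.univ.filter fun i => g i = t).card = n := by
    intro g
    calc ∑ t : ZMod (2 * n + 1), (Finset.univ.filter fun i => g i = t).card
        = (Finset.univ : Finset (Fin n)).card :=
          (Finset.card_eq_sum_card_fiberwise (fun i _ => Finset.mem_univ (g i))).symm
      _ = n := by simp
  have h2 : ∑ t : ZMod (2 * n + 1), m t = 2 * n + 1 := by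
    simp only [hm]
    rw [Finset.sum_add_distrib, Finset.sum_add_distrib, hcard1 a, hcard1 (fun i => -(a i))]
    rw [Finset.sum_ite_eq' Finset.univ (0 : ZMod (2 * n + 1)) (fun _ => 1)]
    simp; ring
  -- Fourier mass
  have hfib : ∀ g : Fin n → ZMod (2 * n + 1),
      ∑ t : ZMod (2 * n + 1),
        (((Finset.univ.filter fun i => g i = t).card : ℂ)) * ec n t
        = ∑ i, ec n (g i) := by
    intro g
    have : ∀ t : ZMod (2 * n + 1),
        (((Finset.univ.filter fun i => g i = t).card : ℂ)) * ec n t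
          = ∑ i, (if g i = t then ec n t else 0) := by
      intro t
      rw [Finset.card_filter]
      push_cast
      rw [Finset.sum_mul]
      exact Finset.sum_congr rfl fun i _ => by split_ifs <;> simp
    simp only [this]
    rw [Finset.sum_comm]
    refine Finset.sum_congr rfl fun i _ => ?_
    rw [Finset.sum_ite_eq Finset.univ (g i) (ec n)]
    simp
  have h1 : ∑ t : ZMod (2 * n + 1), (m t : ℂ) * ec n t = 0 := by
    rw [← ha, lam]
    simp only [hm]
    push_cast
    simp only [add_mul]
    rw [Finset.sum_add_distrib, Finset.sum_add_distrib, hfib a, hfib (fun i => -(a i))]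
    have e0 : ∑ t : ZMod (2 * n + 1), (if t = 0 then (1 : ℂ) else 0) * ec n t = 1 := by
      have : ∀ t : ZMod (2 * n + 1), (if t = 0 then (1 : ℂ) else 0) * ec n t
          = if t = 0 then ec n t else 0 := fun t => by split_ifs <;> simp
      simp only [this]
      rw [Finset.sum_ite_eq' Finset.univ (0 : ZMod (2 * n + 1)) (ec n)]
      simp [ec_zero]
    rw [e0, Finset.sum_add_distrib]
    ring
  -- polynomial step
  set M : ℕ → ℚ := fun k => (m ((k : ℕ) : ZMod (2 * n + 1)) : ℚ) with hM
  set P : ℚ[X] := ∑ k ∈ Finset.range (2 * n + 1), C (M k) * X ^ k with hP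
  have hPcoeff : ∀ k < 2 * n + 1, P.coeff k = M k := by
    intro k hk
    rw [hP, finset_sum_coeff]
    have : ∀ j ∈ Finset.range (2 * n + 1),
        (C (M j) * X ^ j).coeff k = if k = j then M j else 0 := by
      intro j _
      rw [coeff_C_mul, coeff_X_pow]
      split_ifs <;> simp
    rw [Finset.sum_congr rfl this, Finset.sum_ite_eq (Finset.range (2 * n + 1)) k M,
      if_pos (Finset.mem_range.mpr hk)]
  have heval : (aeval (ζ n)) P = 0 := by
    rw [hP]
    rw [map_sum]
    have : ∀ k ∈ Finset.range (2 * n + 1),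
        (aeval (ζ n)) (C (M k) * X ^ k) = (m ((k : ℕ) : ZMod (2 * n + 1)) : ℂ) * ζ n ^ k := by
      intro k _
      rw [map_mul, map_pow, aeval_X, aeval_C]
      norm_num [hM]
    rw [Finset.sum_congr rfl this, ← h1, zmod_sum]
    exact Finset.sum_congr rfl fun k _ => by rw [ec_natCast]
  have hdvd : cyclotomic (2 * n + 1) ℚ ∣ P := by
    rw [cyclotomic_eq_minpoly_rat (zprim n) (by omega)]
    exact minpoly.dvd ℚ _ heval
  obtain ⟨q, hq⟩ := hdvd
  have hMsum : ∑ k ∈ Finset.range (2 * n + 1), M k = (2 * n + 1 : ℚ) := by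
    have h2' := h2
    rw [zmod_sum] at h2'
    simp only [hM]
    rw [← Nat.cast_sum, h2']
    push_cast
    ring
  have hq0 : q ≠ 0 := by
    rintro rfl
    rw [mul_zero] at hq
    have : ∀ k ∈ Finset.range (2 * n + 1), M k = 0 := by
      intro k hk
      rw [← hPcoeff k (Finset.mem_range.mp hk), hq, coeff_zero]
    rw [Finset.sum_congr rfl this, Finset.sum_const, smul_zero] at hMsum
    have hn : (0:ℚ) ≤ (n:ℚ) := Nat.cast_nonneg n
    linarith
  have hcyc0 : cyclotomic (2 * n + 1) ℚ ≠ 0 := (cyclotomic.monic _ ℚ).ne_zero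
  have hdegcyc : (cyclotomic (2 * n + 1) ℚ).natDegree = 2 * n := by
    rw [natDegree_cyclotomic, Nat.totient_prime hp.out]
    omega
  have hdegP : P.natDegree ≤ 2 * n := by
    rw [hP]
    refine natDegree_sum_le_of_forall_le _ _ fun k hk => ?_
    refine le_trans (natDegree_C_mul_le _ _) ?_
    rw [natDegree_X_pow]
    have := Finset.mem_range.mp hk
    omega
  have hdegq : q.natDegree = 0 := by
    have := natDegree_mul hcyc0 hq0
    rw [← hq, hdegcyc] at this
    omega
  obtain ⟨c, hc⟩ : ∃ c, q = C c := ⟨q.coeff 0, eq_C_of_natDegree_eq_zero hdegq⟩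
  have hcyccoeff : ∀ k < 2 * n + 1, (cyclotomic (2 * n + 1) ℚ).coeff k = 1 := by
    intro k hk
    rw [cyclotomic_prime ℚ (2 * n + 1), finset_sum_coeff]
    have : ∀ j ∈ Finset.range (2 * n + 1),
        ((X : ℚ[X]) ^ j).coeff k = if k = j then 1 else 0 := fun j _ => coeff_X_pow j k
    rw [Finset.sum_congr rfl this, Finset.sum_ite_eq (Finset.range (2 * n + 1)) k (fun _ => 1),
      if_pos (Finset.mem_range.mpr hk)]
  have hMc : ∀ k < 2 * n + 1, M k = c := by
    intro k hk
    rw [← hPcoeff k hk, hq, hc, coeff_mul_C, hcyccoeff k hk, one_mul]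
  have hc1 : c = 1 := by
    have : ∑ k ∈ Finset.range (2 * n + 1), M k = (2 * n + 1 : ℚ) * c := by
      rw [Finset.sum_congr rfl (fun k hk => hMc k (Finset.mem_range.mp hk)),
        Finset.sum_const, Finset.card_range, nsmul_eq_mul]
      push_cast; ring
    rw [hMsum] at this
    have h21 : (2 * n + 1 : ℚ) ≠ 0 := by positivity
    field_simp at this
    linarith
  have : M t.val = 1 := by rw [hMc t.val (ZMod.val_lt t), hc1]
  simp only [hM] at this
  have hmt : m ((t.val : ℕ) : ZMod (2 * n + 1)) = 1 := by exact_mod_cast this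
  rwa [show ((t.val : ℕ) : ZMod (2 * n + 1)) = t by
    simp [ZMod.natCast_val, ZMod.cast_id]] at hmt

lemma entries_ne_zero (hp : Fact (Nat.Prime (2 * n + 1))) (a : G n) (ha : lam n a = 0)
    (i : Fin n) : a i ≠ 0 := by
  intro h0
  have key := mult_one n hp a ha 0
  rw [if_pos rfl] at key
  have h1 : 0 < (Finset.univ.filter fun j => a j = 0).card :=
    Finset.card_pos.mpr ⟨i, Finset.mem_filter.mpr ⟨Finset.mem_univ _, h0⟩⟩
  omega

lemma entries_inj (hp : Fact (Nat.Prime (2 * n + 1))) (a : G n) (ha : lam n a = 0)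
    (i j : Fin n) (hij : a i = a j) : i = j := by
  by_contra hne
  have key := mult_one n hp a ha (a j)
  rw [if_neg (entries_ne_zero n hp a ha j)] at key
  have hsub : ({i, j} : Finset (Fin n)) ⊆ Finset.univ.filter fun k => a k = a j := by
    intro k hk
    rcases Finset.mem_insert.mp hk with rfl | hk
    · exact Finset.mem_filter.mpr ⟨Finset.mem_univ _, hij⟩
    · rw [Finset.mem_singleton.mp hk]
      exact Finset.mem_filter.mpr ⟨Finset.mem_univ _, rfl⟩
  have h2 : 2 ≤ (Finset.univ.filter fun k => a k = a j).card := by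
    have hle := Finset.card_le_card hsub
    rwa [Finset.card_pair hne] at hle
  omega

lemma entries_no_neg (hp : Fact (Nat.Prime (2 * n + 1))) (a : G n) (ha : lam n a = 0)
    (i j : Fin n) : a i ≠ -(a j) := by
  intro h
  have key := mult_one n hp a ha (a i)
  rw [if_neg (entries_ne_zero n hp a ha i)] at key
  have h1 : 0 < (Finset.univ.filter fun k => a k = a i).card :=
    Finset.card_pos.mpr ⟨i, Finset.mem_filter.mpr ⟨Finset.mem_univ _, rfl⟩⟩
  have h2 : 0 < (Finset.univ.filter fun k => -(a k) = a i).card :=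
    Finset.card_pos.mpr ⟨j, Finset.mem_filter.mpr ⟨Finset.mem_univ _, h.symm⟩⟩
  omega

/-- "absolute value" of a nonzero residue. -/
def mv (t : ZMod (2 * n + 1)) : ℕ := min t.val (2 * n + 1 - t.val)

lemma mv_bounds {t : ZMod (2 * n + 1)} (ht : t ≠ 0) : 1 ≤ mv n t ∧ mv n t ≤ n := by
  have h1 := ZMod.val_lt t
  have h2 : t.val ≠ 0 := fun h => ht ((ZMod.val_eq_zero t).mp h)
  rw [mv]
  omega

lemma val_cast_self (s : ZMod (2 * n + 1)) : ((s.val : ℕ) : ZMod (2 * n + 1)) = s := by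
  simp [ZMod.natCast_val, ZMod.cast_id]

lemma recov {s t : ZMod (2 * n + 1)} (hs : s ≠ 0) (ht : t ≠ 0) (hm : mv n s = mv n t)
    (hb : (s.val ≤ n ↔ t.val ≤ n)) : s = t := by
  have h1 := ZMod.val_lt s
  have h2 := ZMod.val_lt t
  have h3 : s.val ≠ 0 := fun h => hs ((ZMod.val_eq_zero s).mp h)
  have h4 : t.val ≠ 0 := fun h => ht ((ZMod.val_eq_zero t).mp h)
  rw [mv, mv] at hm
  have hv : s.val = t.val := by
    by_cases hsn : s.val ≤ n
    · have htn := hb.mp hsn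
      omega
    · have htn : ¬ t.val ≤ n := fun h => hsn (hb.mpr h)
      omega
  exact ZMod.val_injective _ hv

lemma mv_cases {s t : ZMod (2 * n + 1)} (hs : s ≠ 0) (ht : t ≠ 0) (hm : mv n s = mv n t) :
    s = t ∨ s = -t := by
  have h1 := ZMod.val_lt s
  have h2 := ZMod.val_lt t
  have h3 : s.val ≠ 0 := fun h => hs ((ZMod.val_eq_zero s).mp h)
  have h4 : t.val ≠ 0 := fun h => ht ((ZMod.val_eq_zero t).mp h)
  have hnt : (-t) ≠ 0 := fun h => ht (neg_eq_zero.mp h)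
  have hntv : (-t).val = 2 * n + 1 - t.val := by
    rw [ZMod.neg_val, if_neg ht]
  have hmnt : mv n (-t) = mv n t := by
    rw [mv, mv, hntv]
    omega
  by_cases hsn : s.val ≤ n <;> by_cases htn : t.val ≤ n
  · exact Or.inl (recov n hs ht hm (by tauto))
  · refine Or.inr (recov n hs hnt (hm.trans hmnt.symm) ?_)
    rw [hntv]
    omega
  · refine Or.inr (recov n hs hnt (hm.trans hmnt.symm) ?_)
    rw [hntv]
    omega
  · exact Or.inl (recov n hs ht hm (by tauto))

lemma card_lam_zero (hp : Fact (Nat.Prime (2 * n + 1))) :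
    Fintype.card {a : G n // lam n a = 0} ≤ n.factorial * 2 ^ n := by
  classical
  have hmv_lt : ∀ (a : {a : G n // lam n a = 0}) (i : Fin n), mv n (a.1 i) - 1 < n := by
    intro a i
    have := mv_bounds n (entries_ne_zero n hp a.1 a.2 i)
    omega
  set Φ : {a : G n // lam n a = 0} → (Fin n ↪ Fin n) × (Fin n → Bool) := fun a =>
    (⟨fun i => ⟨mv n (a.1 i) - 1, hmv_lt a i⟩, by
      intro i j hij
      have hmv : mv n (a.1 i) = mv n (a.1 j) := by
        have b1 := mv_bounds n (entries_ne_zero n hp a.1 a.2 i)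
        have b2 := mv_bounds n (entries_ne_zero n hp a.1 a.2 j)
        have := congrArg Fin.val hij
        simp only at this
        omega
      rcases mv_cases n (entries_ne_zero n hp a.1 a.2 i)
          (entries_ne_zero n hp a.1 a.2 j) hmv with h | h
      · exact entries_inj n hp a.1 a.2 i j h
      · exact absurd h (entries_no_neg n hp a.1 a.2 i j)⟩,
     fun i => decide ((a.1 i).val ≤ n)) with hΦ
  have hinj : Function.Injective Φ := by
    intro a b hab
    rw [hΦ, Prod.mk.injEq] at hab
    obtain ⟨he, hs⟩ := hab
    apply Subtype.ext
    funext i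
    have hmv : mv n (a.1 i) = mv n (b.1 i) := by
      have := congrArg (fun (e : Fin n ↪ Fin n) => (e i).val) he
      change mv n (a.1 i) - 1 = mv n (b.1 i) - 1 at this
      have b1 := mv_bounds n (entries_ne_zero n hp a.1 a.2 i)
      have b2 := mv_bounds n (entries_ne_zero n hp b.1 b.2 i)
      omega
    have hbool : ((a.1 i).val ≤ n ↔ (b.1 i).val ≤ n) := by
      have := congrFun hs i
      simp only [decide_eq_decide] at this
      exact this
    exact recov n (entries_ne_zero n hp a.1 a.2 i) (entries_ne_zero n hp b.1 b.2 i) hmv hbool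
  have := Fintype.card_le_of_injective Φ hinj
  calc Fintype.card {a : G n // lam n a = 0}
      ≤ Fintype.card ((Fin n ↪ Fin n) × (Fin n → Bool)) := this
    _ = n.factorial * 2 ^ n := by
        rw [Fintype.card_prod, Fintype.card_embedding_eq, Fintype.card_fin,
          Nat.descFactorial_self]
        congr 1
        simp [Fintype.card_fun]

def NopL : (G n → ℂ) →ₗ[ℂ] (G n → ℂ) where
  toFun := Nop n
  map_add' f g := by
    funext x
    simp only [Nop, Pi.add_apply, Finset.sum_add_distrib]
    ring
  map_smul' c f := by
    funext x
    simp only [Nop, Pi.smul_apply, smul_eq_mul, RingHom.id_apply, mul_add, Finset.mul_sum]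

lemma finrank_ker (hp : Fact (Nat.Prime (2 * n + 1))) :
    Module.finrank ℂ (LinearMap.ker (NopL n)) ≤ n.factorial * 2 ^ n := by
  classical
  let T : (G n → ℂ) →ₗ[ℂ] ({a : G n // lam n a = 0} → ℂ) :=
    { toFun := fun f z => dft n f z.1
      map_add' := fun f g => by
        funext z
        simp only [dft, Pi.add_apply, add_mul, Finset.sum_add_distrib]
      map_smul' := fun c f => by
        funext z
        simp only [dft, Pi.smul_apply, smul_eq_mul, RingHom.id_apply, Finset.mul_sum,
          mul_assoc] }
  let T' : LinearMap.ker (NopL n) →ₗ[ℂ] ({a : G n // lam n a = 0} → ℂ) :=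
    T.comp (Submodule.subtype _)
  have key : ∀ f : LinearMap.ker (NopL n), T' f = 0 → f = 0 := by
    intro f hf
    have hker : Nop n f.1 = 0 := f.2
    have hall : ∀ a, dft n f.1 a = 0 := by
      intro a
      by_cases hla : lam n a = 0
      · exact congrFun hf ⟨a, hla⟩
      · have := dft_Nop n f.1 a
        rw [hker] at this
        have h0 : dft n (0 : G n → ℂ) a = 0 := by simp [dft]
        rw [h0] at this
        exact (mul_eq_zero.mp this.symm).resolve_left hla
    exact Subtype.ext (dft_eq_zero n hp hall)
  have hinj : Function.Injective T' := by
    intro f g h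
    have := key (f - g) (by rw [map_sub, h, sub_self])
    exact sub_eq_zero.mp this
  have hle := LinearMap.finrank_le_finrank_of_injective hinj
  rw [Module.finrank_pi] at hle
  exact hle.trans (card_lam_zero n hp)

lemma finrank_comap_le {V : Type*} [AddCommGroup V] [Module ℂ V] [FiniteDimensional ℂ V]
    (f : V →ₗ[ℂ] V) (q : Submodule ℂ V) :
    Module.finrank ℂ (Submodule.comap f q)
      ≤ Module.finrank ℂ q + Module.finrank ℂ (LinearMap.ker f) := by
  set p := Submodule.comap f q with hp
  let g : p →ₗ[ℂ] q := f.restrict (p := p) (q := q) (fun x hx => hx)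
  have h1 := LinearMap.finrank_range_add_finrank_ker g
  have h2 : Module.finrank ℂ (LinearMap.range g) ≤ Module.finrank ℂ q :=
    Submodule.finrank_le _
  have h3 : Module.finrank ℂ (LinearMap.ker g) ≤ Module.finrank ℂ (LinearMap.ker f) := by
    let ι : LinearMap.ker g →ₗ[ℂ] LinearMap.ker f :=
      { toFun := fun x => ⟨(x.1 : V), by
          rw [LinearMap.mem_ker]
          exact congrArg Subtype.val (LinearMap.mem_ker.mp x.2)⟩
        map_add' := fun x y => rfl
        map_smul' := fun c x => rfl }
    have hιinj : Function.Injective ι := by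
      intro x y h
      have := congrArg Subtype.val h
      simp only [ι] at this
      exact Subtype.ext (Subtype.ext this)
    exact LinearMap.finrank_le_finrank_of_injective hιinj
  omega

lemma single_ne_zero' (i : Fin n) : (Pi.single i 1 : G n) ≠ 0 := by
  intro h
  have h1 := congrFun h i
  rw [Pi.single_eq_same, Pi.zero_apply] at h1
  haveI : Fact (1 < 2 * n + 1) := ⟨by have := i.pos; omega⟩
  exact one_ne_zero h1

lemma single_inj' {i j : Fin n} (h : (Pi.single i 1 : G n) = Pi.single j 1) : i = j := by
  by_contra hne
  have h1 := congrFun h i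
  rw [Pi.single_eq_same, Pi.single_eq_of_ne hne] at h1
  haveI : Fact (1 < 2 * n + 1) := ⟨by have := i.pos; omega⟩
  exact one_ne_zero h1

lemma single_ne_neg (i j : Fin n) : (Pi.single i 1 : G n) ≠ -(Pi.single j 1) := by
  intro h
  haveI : Fact (1 < 2 * n + 1) := ⟨by have := i.pos; omega⟩
  by_cases hij : i = j
  · subst hij
    have h1 := congrFun h i
    rw [Pi.single_eq_same, Pi.neg_apply, Pi.single_eq_same] at h1
    have h2 : (1 : ZMod (2 * n + 1)) + 1 = 0 := add_eq_zero_iff_eq_neg.mpr h1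
    have h3 : ((2 : ℕ) : ZMod (2 * n + 1)) = 0 := by push_cast; linear_combination h2
    rw [ZMod.natCast_eq_zero_iff] at h3
    have := Nat.le_of_dvd (by norm_num) h3
    have := i.pos
    omega
  · have h1 := congrFun h i
    rw [Pi.single_eq_same, Pi.neg_apply, Pi.single_eq_of_ne hij, neg_zero] at h1
    exact one_ne_zero h1

lemma sum_closed (g : G n → ℂ) (x : G n) :
    ∑ u, (if u = x ∨ (cay n).Adj u x then g u else 0)
      = g x + ∑ i, (g (x - Pi.single i 1) + g (x + Pi.single i 1)) := by
  classical
  have hiff : ∀ u : G n, (u = x ∨ (cay n).Adj u x)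
      ↔ (u = x ∨ (∃ i, u = x + Pi.single i 1 ∨ u = x - Pi.single i 1)) := by
    intro u
    constructor
    · rintro (rfl | ⟨i, h | h⟩)
      · exact Or.inl rfl
      · exact Or.inr ⟨i, Or.inl (by rw [← h]; abel)⟩
      · exact Or.inr ⟨i, Or.inr (by rw [← h]; abel)⟩
    · rintro (rfl | ⟨i, rfl | rfl⟩)
      · exact Or.inl rfl
      · exact Or.inr ⟨i, Or.inl (by abel)⟩
      · exact Or.inr ⟨i, Or.inr (by abel)⟩
  set A : Finset (G n) := Finset.image (fun i => x + Pi.single i 1) Finset.univ with hA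
  set B : Finset (G n) := Finset.image (fun i => x - Pi.single i 1) Finset.univ with hB
  have hmem : ∀ u : G n, (u = x ∨ (cay n).Adj u x) ↔ u ∈ insert x (A ∪ B) := by
    intro u
    rw [hiff u, Finset.mem_insert, Finset.mem_union, hA, hB]
    simp only [Finset.mem_image, Finset.mem_univ, true_and]
    constructor
    · rintro (rfl | ⟨i, rfl | rfl⟩)
      · exact Or.inl rfl
      · exact Or.inr (Or.inl ⟨i, rfl⟩)
      · exact Or.inr (Or.inr ⟨i, rfl⟩)
    · rintro (rfl | ⟨i, rfl⟩ | ⟨i, rfl⟩)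
      · exact Or.inl rfl
      · exact Or.inr ⟨i, Or.inl rfl⟩
      · exact Or.inr ⟨i, Or.inr rfl⟩
  have hxA : x ∉ A ∪ B := by
    intro hx
    rcases Finset.mem_union.mp hx with hx | hx
    · obtain ⟨i, _, hi⟩ := Finset.mem_image.mp hx
      exact single_ne_zero' n i (by
        have : x + Pi.single i 1 = x := hi
        have h2 := add_eq_left.mp this
        exact h2)
    · obtain ⟨i, _, hi⟩ := Finset.mem_image.mp hx
      exact single_ne_zero' n i (by
        have : x - Pi.single i 1 = x := hi
        exact sub_eq_self.mp this)
  have hAB : Disjoint A B := by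
    rw [Finset.disjoint_left]
    intro u huA huB
    obtain ⟨i, _, hi⟩ := Finset.mem_image.mp huA
    obtain ⟨j, _, hj⟩ := Finset.mem_image.mp huB
    have h3 : x + Pi.single i 1 = x - Pi.single j 1 := hi.trans hj.symm
    have h4 : (Pi.single i 1 : G n) = -(Pi.single j 1) := by
      have := congrArg (fun y => y - x) h3
      simpa [add_sub_cancel_left, sub_sub_cancel_left] using this
    exact single_ne_neg n i j h4
  calc ∑ u, (if u = x ∨ (cay n).Adj u x then g u else 0)
      = ∑ u, (if u ∈ insert x (A ∪ B) then g u else 0) := by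
        refine Finset.sum_congr rfl fun u _ => ?_
        rw [if_congr (hmem u) rfl rfl]
    _ = ∑ u ∈ insert x (A ∪ B), g u := by
        rw [Finset.sum_ite_mem, Finset.univ_inter]
    _ = g x + (∑ u ∈ A, g u + ∑ u ∈ B, g u) := by
        rw [Finset.sum_insert hxA, Finset.sum_union hAB]
    _ = g x + ∑ i, (g (x - Pi.single i 1) + g (x + Pi.single i 1)) := by
        rw [hA, hB, Finset.sum_image (fun i _ j _ h => single_inj' n (by
            have := congrArg (fun y => y - x) h
            simpa [add_sub_cancel_left] using this)),
          Finset.sum_image (fun i _ j _ h => single_inj' n (by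
            have h2 : -(Pi.single i 1 : G n) = -(Pi.single j 1) := by
              have := congrArg (fun y => y - x) h
              simpa [sub_sub_cancel_left] using this
            exact neg_injective h2)),
          Finset.sum_add_distrib]
        ring

lemma Nop_indicator (S : Set (G n)) (hS : PerfDom (cay n) S) :
    Nop n (S.indicator fun _ => (1 : ℂ)) = fun _ => 1 := by
  classical
  funext x
  have h1 : Nop n (S.indicator fun _ => (1 : ℂ)) x
      = ∑ u, (if u = x ∨ (cay n).Adj u x then (S.indicator fun _ => (1 : ℂ)) u else 0) :=
    (sum_closed n _ x).symm
  rw [h1]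
  have h2 : ∀ u : G n, (if u = x ∨ (cay n).Adj u x then (S.indicator fun _ => (1 : ℂ)) u else 0)
      = if (u ∈ S ∧ (u = x ∨ (cay n).Adj u x)) then 1 else 0 := by
    intro u
    rw [Set.indicator_apply]
    split_ifs <;> tauto
  rw [Finset.sum_congr rfl (fun u _ => h2 u)]
  obtain ⟨u0, hu0, huniq⟩ := hS x
  have hfilter : Finset.univ.filter (fun u => u ∈ S ∧ (u = x ∨ (cay n).Adj u x)) = {u0} :=
    Finset.eq_singleton_iff_unique_mem.mpr
      ⟨Finset.mem_filter.mpr ⟨Finset.mem_univ _, hu0⟩,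
        fun y hy => huniq y (Finset.mem_filter.mp hy).2⟩
  rw [← Finset.sum_filter, hfilter, Finset.sum_singleton]

end
end Stmt9

/-- For `p = 2n+1` prime, the span over `ℂ` of the characteristic
vectors of all perfect dominating sets of `Γ(ℤ_pⁿ, 𝒰)` has dimension at most
`1 + n!·2ⁿ`. -/
theorem stmt9 (n : ℕ) (hp : Nat.Prime (2 * n + 1)) :
    Module.finrank ℂ (Submodule.span ℂ
        {f : (Fin n → ZMod (2 * n + 1)) → ℂ |
          ∃ S : Set (Fin n → ZMod (2 * n + 1)), PerfDom (cay n) S ∧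
            f = S.indicator (fun _ => (1 : ℂ))})
      ≤ 1 + n.factorial * 2 ^ n := by
  classical
  haveI hpf : Fact (Nat.Prime (2 * n + 1)) := ⟨hp⟩
  have hone0 : (fun _ => (1 : ℂ) : (Fin n → ZMod (2 * n + 1)) → ℂ) ≠ 0 := by
    intro h
    have := congrFun h 0
    simp at this
  have hspan : Submodule.span ℂ
      {f : (Fin n → ZMod (2 * n + 1)) → ℂ |
        ∃ S : Set (Fin n → ZMod (2 * n + 1)), PerfDom (cay n) S ∧
          f = S.indicator (fun _ => (1 : ℂ))}
      ≤ Submodule.comap (Stmt9.NopL n) (Submodule.span ℂ {fun _ => (1 : ℂ)}) := by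
    rw [Submodule.span_le]
    rintro f ⟨S, hS, rfl⟩
    have h5 : Stmt9.NopL n (S.indicator fun _ => (1 : ℂ)) = fun _ => (1 : ℂ) :=
      Stmt9.Nop_indicator n S hS
    simp only [SetLike.mem_coe, Submodule.mem_comap, h5]
    exact Submodule.mem_span_singleton_self _
  have h1 := Submodule.finrank_mono hspan
  have h2 := Stmt9.finrank_comap_le (Stmt9.NopL n)
    (Submodule.span ℂ {(fun _ => (1 : ℂ) : (Fin n → ZMod (2 * n + 1)) → ℂ)})
  have h3 : Module.finrank ℂ
      (Submodule.span ℂ {(fun _ => (1 : ℂ) : (Fin n → ZMod (2 * n + 1)) → ℂ)}) = 1 :=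
    finrank_span_singleton hone0
  have h4 := Stmt9.finrank_ker n hpf
  refine h1.trans (h2.trans ?_)
  rw [h3]
  omega
end

section
/- Let p = 2n+1 be prime, let S be a perfect dominating set of Γ(ℤ_pⁿ, 𝒰) with characteristic function f : ℤ_pⁿ → {0,1}, and define the Fourier coefficients f̂(y) = (1/pⁿ)·Σ_{x ∈ ℤ_pⁿ} f(x)·ω^{−Σᵢ xᵢyᵢ} with ω = e^{2πi/p}. Then for every y ≠ 0 with f̂(y) ≠ 0, one has {y₁,…,yₙ} ∪ {−y₁,…,−yₙ} = {1,…,2n} as residues mod p. -/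
open Polynomial in
lemma aux_count {p : ℕ} [hpf : Fact p.Prime] {ω : ℂ} (hprim : IsPrimitiveRoot ω p)
    (c : ZMod p → ℕ) (hsum : ∑ j : ZMod p, c j = p)
    (hzero : ∑ j : ZMod p, (c j : ℂ) * ω ^ j.val = 0) :
    ∀ j, c j = 1 := by
  have hp1 : 1 < p := hpf.out.one_lt
  haveI : NeZero p := ⟨by omega⟩
  set P : ℚ[X] := ∑ j : ZMod p, C (c j : ℚ) * X ^ j.val with hP
  have hcoeff : ∀ j0 : ZMod p, P.coeff j0.val = (c j0 : ℚ) := by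
    intro j0
    rw [hP, finset_sum_coeff, Finset.sum_eq_single j0]
    · simp
    · intro j _ hne
      rw [coeff_C_mul, coeff_X_pow, if_neg, mul_zero]
      exact fun h => hne (ZMod.val_injective p h.symm)
    · simp
  have haeval : aeval ω P = 0 := by
    rw [hP]
    simp only [map_sum, map_mul, aeval_C, aeval_X_pow]
    simpa using hzero
  have hdvd : cyclotomic p ℚ ∣ P := by
    rw [cyclotomic_eq_minpoly_rat hprim (by omega)]
    exact minpoly.dvd ℚ ω haeval
  obtain ⟨Q, hQ⟩ := hdvd
  have hPdeg : P.natDegree ≤ p - 1 := by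
    rw [hP]
    apply natDegree_sum_le_of_forall_le
    intro j _
    refine le_trans (natDegree_C_mul_le _ _) ?_
    rw [natDegree_X_pow]
    have := ZMod.val_lt j
    omega
  have hPne : P ≠ 0 := by
    intro h
    have : ∀ j : ZMod p, c j = 0 := by
      intro j
      have := hcoeff j
      rw [h, coeff_zero] at this
      exact_mod_cast this.symm
    rw [Finset.sum_congr rfl (fun j _ => this j)] at hsum
    simp at hsum
    omega
  have hQne : Q ≠ 0 := by rintro rfl; rw [mul_zero] at hQ; exact hPne hQ
  have hcy : (cyclotomic p ℚ).natDegree = p - 1 := by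
    rw [natDegree_cyclotomic, Nat.totient_prime hpf.out]
  have hQdeg : Q.natDegree = 0 := by
    have := natDegree_mul (cyclotomic_ne_zero p ℚ) hQne
    rw [← hQ, hcy] at this
    omega
  obtain ⟨a, rfl⟩ : ∃ a : ℚ, Q = C a := ⟨Q.coeff 0, (Polynomial.eq_C_of_natDegree_eq_zero hQdeg)⟩
  have hca : ∀ j0 : ZMod p, (c j0 : ℚ) = a := by
    intro j0
    have h1 : (cyclotomic p ℚ).coeff j0.val = 1 := by
      rw [cyclotomic_prime, finset_sum_coeff]
      simp only [coeff_X_pow]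
      rw [Finset.sum_ite_eq (Finset.range p) j0.val (fun _ => (1:ℚ))]
      simp [ZMod.val_lt j0]
    rw [← hcoeff j0, hQ, coeff_mul_C, h1, one_mul]
  have ha : a = 1 := by
    have h2 : ((∑ j : ZMod p, c j : ℕ) : ℚ) = ((Finset.univ : Finset (ZMod p)).card : ℚ) * a := by
      push_cast
      rw [Finset.sum_congr rfl (fun j _ => hca j), Finset.sum_const, nsmul_eq_mul]
    rw [hsum, show (Finset.univ : Finset (ZMod p)).card = p from by rw [Finset.card_univ, ZMod.card]] at h2
    have hp0 : (p : ℚ) ≠ 0 := by positivity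
    have := mul_left_cancel₀ hp0 (h2.symm.trans (mul_one (p:ℚ)).symm)
    linarith
  intro j
  have := hca j
  rw [ha] at this
  exact_mod_cast this


/-- Let `p = 2n+1` be prime, `S` a perfect dominating set of
`Γ(ℤ_pⁿ, 𝒰)` with characteristic function `f`, and
`f̂(y) = p⁻ⁿ Σₓ f(x)·ω^{−Σᵢ xᵢyᵢ}` its Fourier coefficients, `ω = e^{2πi/p}`.
Then for every `y ≠ 0` with `f̂(y) ≠ 0`, the `2n` residues `±y₁, …, ±yₙ` are pairwise
distinct and are exactly the nonzero residues `1, …, 2n` mod `p`. -/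
theorem stmt15 (n : ℕ) (hp : Nat.Prime (2 * n + 1))
    (S : Set (Fin n → ZMod (2 * n + 1))) (hS : PerfDom (cay n) S)
    (y : Fin n → ZMod (2 * n + 1)) (hy : y ≠ 0)
    (hfy : (1 / ((2 * n + 1 : ℕ) : ℂ) ^ n) *
        ∑ x : Fin n → ZMod (2 * n + 1),
          S.indicator (fun _ => (1 : ℂ)) x *
            Complex.exp (2 * Real.pi * Complex.I / (2 * n + 1)) ^ (-(∑ i, x i * y i)).val
      ≠ 0) :
    Function.Injective (Sum.elim y (fun i => -(y i))) ∧
      Set.range (Sum.elim y (fun i => -(y i))) = {z : ZMod (2 * n + 1) | z ≠ 0} := by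
  classical
  haveI hpf : Fact (Nat.Prime (2 * n + 1)) := ⟨hp⟩
  haveI : NeZero (2 * n + 1) := ⟨by omega⟩
  have hn : 0 < n := by
    rcases Nat.eq_zero_or_pos n with h | h
    · subst h; norm_num at hp
    · exact h
  set ω : ℂ := Complex.exp (2 * Real.pi * Complex.I / (2 * n + 1)) with hωdef
  have hprim : IsPrimitiveRoot ω (2 * n + 1) := by
    have h := Complex.isPrimitiveRoot_exp (2 * n + 1) (by omega)
    rw [show (((2 * n + 1 : ℕ)) : ℂ) = 2 * (n : ℂ) + 1 by push_cast; ring] at h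
    exact h
  have hωp : ω ^ (2 * n + 1) = 1 := hprim.pow_eq_one
  have hmod : ∀ k : ℕ, ω ^ (k % (2 * n + 1)) = ω ^ k := by
    intro k
    conv_rhs => rw [← Nat.div_add_mod k (2 * n + 1), pow_add, pow_mul, hωp, one_pow, one_mul]
  set χ : ZMod (2 * n + 1) → ℂ := fun a => ω ^ a.val with hχdef
  have hχadd : ∀ a b : ZMod (2 * n + 1), χ (a + b) = χ a * χ b := by
    intro a b
    rw [hχdef]
    simp only
    rw [ZMod.val_add, hmod, pow_add]
  have hχne : ∀ a : ZMod (2 * n + 1), a ≠ 0 → χ a ≠ 1 := by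
    intro a ha
    have h1 : a.val ≠ 0 := fun h => ha ((ZMod.val_eq_zero a).mp h)
    exact hprim.pow_ne_one_of_pos_of_lt h1 (ZMod.val_lt a)
  set f : (Fin n → ZMod (2 * n + 1)) → ℂ := S.indicator (fun _ => (1 : ℂ)) with hfdef
  set dot : (Fin n → ZMod (2 * n + 1)) → ZMod (2 * n + 1) := fun v => ∑ i, v i * y i with hdotdef
  have hdotadd : ∀ v w, dot (v + w) = dot v + dot w := by
    intro v w
    simp only [hdotdef, Pi.add_apply, add_mul, Finset.sum_add_distrib]
  have hdotsingle : ∀ i : Fin n, dot (Pi.single i 1) = y i := by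
    intro i
    simp only [hdotdef]
    rw [Finset.sum_eq_single i]
    · rw [Pi.single_eq_same, one_mul]
    · intro j _ hj; rw [Pi.single_eq_of_ne hj, zero_mul]
    · intro h; exact absurd (Finset.mem_univ i) h
  -- domination count
  haveI : Fact (1 < 2 * n + 1) := ⟨by omega⟩
  have h2ne : (2 : ZMod (2 * n + 1)) ≠ 0 := by
    intro h
    rw [show ((2 : ZMod (2 * n + 1))) = ((2 : ℕ) : ZMod (2 * n + 1)) by push_cast; ring,
      ZMod.natCast_eq_zero_iff] at h
    have := Nat.le_of_dvd (by norm_num) h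
    omega
  have hsingle_eq : ∀ i j : Fin n,
      (Pi.single i 1 : Fin n → ZMod (2 * n + 1)) = Pi.single j 1 → i = j := by
    intro i j h
    by_contra hne
    have h1 := congrFun h i
    rw [Pi.single_eq_same, Pi.single_eq_of_ne hne] at h1
    exact one_ne_zero h1
  have hsingle_neg : ∀ i j : Fin n,
      (Pi.single i 1 : Fin n → ZMod (2 * n + 1)) ≠ -Pi.single j 1 := by
    intro i j h
    have h1 := congrFun h i
    rw [Pi.single_eq_same, Pi.neg_apply] at h1
    by_cases hij : i = j
    · subst hij
      rw [Pi.single_eq_same] at h1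
      apply h2ne
      linear_combination h1
    · rw [Pi.single_eq_of_ne hij, neg_zero] at h1
      exact one_ne_zero h1
  have hdom : ∀ v, f v + ∑ i, (f (v + Pi.single i 1) + f (v - Pi.single i 1)) = 1 := by
    intro v
    obtain ⟨u0, ⟨hu0S, hu0dom⟩, huniq⟩ := hS v
    set D : Option (Fin n × Bool) → (Fin n → ZMod (2 * n + 1)) := fun t =>
      match t with
      | none => v
      | some (i, true) => v + Pi.single i 1
      | some (i, false) => v - Pi.single i 1
      with hD
    have hszero : ∀ j : Fin n, (Pi.single j 1 : Fin n → ZMod (2 * n + 1)) ≠ 0 := by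
      intro j h
      have h1 := congrFun h j
      rw [Pi.single_eq_same, Pi.zero_apply] at h1
      exact one_ne_zero h1
    have hDinj : Function.Injective D := by
      rintro (_ | ⟨i, _ | _⟩) (_ | ⟨j, _ | _⟩) h <;>
        simp only [hD] at h
      · rfl
      · exact absurd (sub_eq_self.mp h.symm) (hszero j)
      · exact absurd (left_eq_add.mp h) (hszero j)
      · exact absurd (sub_eq_self.mp h) (hszero i)
      · rw [hsingle_eq i j (sub_right_inj.mp h)]
      · exact absurd (add_left_cancel
          (show v + -Pi.single i 1 = v + Pi.single j 1 by
            rw [← sub_eq_add_neg]; exact h)).symm (hsingle_neg j i)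
      · exact absurd (add_eq_left.mp h) (hszero i)
      · exact absurd (add_left_cancel
          (show v + Pi.single i 1 = v + -Pi.single j 1 by
            rw [← sub_eq_add_neg]; exact h)) (hsingle_neg i j)
      · rw [hsingle_eq i j (add_left_cancel h)]
    have hcov : ∀ u, (u = v ∨ (cay n).Adj u v) ↔ ∃ t, D t = u := by
      intro u
      constructor
      · rintro (rfl | ⟨i, h1 | h2⟩)
        · exact ⟨none, rfl⟩
        · exact ⟨some (i, true), by
            simp only [hD]
            rw [eq_comm, ← sub_eq_iff_eq_add']
            exact h1⟩
        · exact ⟨some (i, false), by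
            simp only [hD]
            rw [eq_comm, eq_sub_iff_add_eq, ← eq_sub_iff_add_eq']
            exact h2.symm⟩
      · rintro ⟨(_ | ⟨i, _ | _⟩), rfl⟩
        · exact Or.inl rfl
        · exact Or.inr ⟨i, Or.inr (by simp only [hD]; rw [sub_sub_cancel])⟩
        · exact Or.inr ⟨i, Or.inl (by simp only [hD]; rw [add_sub_cancel_left])⟩
    have hexu : ∃! t, D t ∈ S := by
      obtain ⟨t0, ht0⟩ := (hcov u0).mp hu0dom
      refine ⟨t0, by show D t0 ∈ S; rw [ht0]; exact hu0S, fun t ht => ?_⟩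
      have hDt : D t = u0 := huniq (D t) ⟨ht, (hcov (D t)).mpr ⟨t, rfl⟩⟩
      exact hDinj (hDt.trans ht0.symm)
    have hsum1 : ∑ t : Option (Fin n × Bool), f (D t) = 1 := by
      have hft : ∀ t, f (D t) = if D t ∈ S then 1 else 0 := fun t => by
        rw [hfdef, Set.indicator_apply]
      rw [Finset.sum_congr rfl (fun t _ => hft t), Finset.sum_boole]
      norm_cast
      rw [Finset.card_eq_one]
      obtain ⟨t0, ht0, ht0u⟩ := hexu
      refine ⟨t0, ?_⟩
      ext t
      simp only [Finset.mem_filter, Finset.mem_univ, true_and, Finset.mem_singleton]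
      exact ⟨fun h => ht0u t h, fun h => h ▸ ht0⟩
    rw [← hsum1, Fintype.sum_option, Fintype.sum_prod_type]
    congr 1
    refine Finset.sum_congr rfl fun i _ => ?_
    rw [Fintype.sum_bool]
  -- character sum vanishes
  have hcharsum : ∑ v : Fin n → ZMod (2 * n + 1), χ (-(dot v)) = 0 := by
    obtain ⟨i0, hi0⟩ : ∃ i, y i ≠ 0 := by
      by_contra h
      push_neg at h
      exact hy (funext h)
    have hshift0 : ∑ v : Fin n → ZMod (2 * n + 1), χ (-(dot v))
        = χ (-(y i0)) * ∑ v : Fin n → ZMod (2 * n + 1), χ (-(dot v)) := by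
      conv_lhs => rw [← Equiv.sum_comp
        (Equiv.addRight (Pi.single i0 1 : Fin n → ZMod (2 * n + 1)))
        (fun v => χ (-(dot v)))]
      rw [Finset.mul_sum]
      apply Finset.sum_congr rfl
      intro v _
      simp only [Equiv.coe_addRight]
      rw [hdotadd, hdotsingle, ← hχadd]
      congr 1
      ring
    have hne : χ (-(y i0)) ≠ 1 := hχne _ (neg_ne_zero.mpr hi0)
    have h0 : (χ (-(y i0)) - 1) * ∑ v : Fin n → ZMod (2 * n + 1), χ (-(dot v)) = 0 := by
      rw [sub_mul, one_mul, ← hshift0, sub_self]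
    rcases mul_eq_zero.mp h0 with h | h
    · exact absurd (by linear_combination h) hne
    · exact h
  -- T nonzero
  set T : ℂ := ∑ x : Fin n → ZMod (2 * n + 1), f x * χ (-(dot x)) with hTdef
  have hT : T ≠ 0 := by
    intro h
    apply hfy
    rw [h, mul_zero]
  -- shifted sums
  have hshift : ∀ s : Fin n → ZMod (2 * n + 1),
      T * χ (dot s) = ∑ v, f (v + s) * χ (-(dot v)) := by
    intro s
    rw [hTdef, Finset.sum_mul]
    rw [← Equiv.sum_comp (Equiv.addRight s) (fun v => f v * χ (-(dot v)) * χ (dot s))]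
    apply Finset.sum_congr rfl
    intro v _
    simp only [Equiv.coe_addRight]
    rw [mul_assoc, ← hχadd]
    congr 2
    rw [hdotadd]
    ring
  have hdotneg : ∀ w, dot (-w) = -(dot w) := by
    intro w
    simp only [hdotdef, Pi.neg_apply, neg_mul]
    exact Finset.sum_neg_distrib _
  -- key identity
  have hkey : (1 : ℂ) + ∑ i, (χ (y i) + χ (-(y i))) = 0 := by
    have hrhs : ∀ i : Fin n, T * (χ (y i) + χ (-(y i)))
        = ∑ v, (f (v + Pi.single i 1) + f (v - Pi.single i 1)) * χ (-(dot v)) := by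
      intro i
      rw [mul_add]
      have h1 := hshift (Pi.single i 1)
      rw [hdotsingle] at h1
      have h2 := hshift (-(Pi.single i 1))
      rw [hdotneg, hdotsingle] at h2
      rw [h1, h2, ← Finset.sum_add_distrib]
      apply Finset.sum_congr rfl
      intro v _
      rw [add_mul, ← sub_eq_add_neg]
    have hmain : T * ((1 : ℂ) + ∑ i, (χ (y i) + χ (-(y i)))) = 0 := by
      calc T * ((1:ℂ) + ∑ i, (χ (y i) + χ (-(y i))))
          = T + ∑ i, T * (χ (y i) + χ (-(y i))) := by
            rw [mul_add, mul_one, Finset.mul_sum]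
        _ = ∑ v, f v * χ (-(dot v)) + ∑ i, ∑ v, (f (v + Pi.single i 1)
              + f (v - Pi.single i 1)) * χ (-(dot v)) := by
            rw [hTdef]
            exact congrArg _ (Finset.sum_congr rfl fun i _ => hrhs i)
        _ = ∑ v, (f v + ∑ i, (f (v + Pi.single i 1) + f (v - Pi.single i 1)))
              * χ (-(dot v)) := by
            rw [Finset.sum_comm, ← Finset.sum_add_distrib]
            apply Finset.sum_congr rfl
            intro v _
            rw [add_mul, Finset.sum_mul]
        _ = ∑ v : Fin n → ZMod (2 * n + 1), χ (-(dot v)) := by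
            apply Finset.sum_congr rfl
            intro v _
            rw [hdom v, one_mul]
        _ = 0 := hcharsum
    exact (mul_eq_zero.mp hmain).resolve_left hT
  -- counting function
  set c : ZMod (2 * n + 1) → ℕ := fun j =>
    (if j = 0 then 1 else 0) + (Finset.univ.filter (fun i => y i = j)).card
      + (Finset.univ.filter (fun i => -(y i) = j)).card with hcdef
  have hfib1 : ∀ g : Fin n → ZMod (2 * n + 1),
      ∑ j : ZMod (2 * n + 1), (Finset.univ.filter (fun i => g i = j)).card = n := by
    intro g
    rw [← Finset.card_eq_sum_card_fiberwise (f := g) (t := Finset.univ)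
      (fun x _ => Finset.mem_univ _)]
    simp
  have hcsum : ∑ j : ZMod (2 * n + 1), c j = 2 * n + 1 := by
    simp only [hcdef]
    rw [Finset.sum_add_distrib, Finset.sum_add_distrib, hfib1 y, hfib1 (fun i => -(y i)),
      Finset.sum_ite_eq' Finset.univ (0 : ZMod (2 * n + 1)) (fun _ => 1)]
    simp only [Finset.mem_univ, if_pos]
    omega
  have hfibχ : ∀ g : Fin n → ZMod (2 * n + 1),
      ∑ j : ZMod (2 * n + 1), ((Finset.univ.filter (fun i => g i = j)).card : ℂ) * ω ^ j.val
        = ∑ i : Fin n, χ (g i) := by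
    intro g
    rw [← Finset.sum_fiberwise Finset.univ g (fun i => χ (g i))]
    apply Finset.sum_congr rfl
    intro j _
    have hcg : ∀ i ∈ Finset.univ.filter (fun i => g i = j), χ (g i) = χ j := by
      intro i hi
      rw [(Finset.mem_filter.mp hi).2]
    rw [Finset.sum_congr rfl hcg, Finset.sum_const, nsmul_eq_mul]
  have hczero : ∑ j : ZMod (2 * n + 1), (c j : ℂ) * ω ^ j.val = 0 := by
    have e1 : ∑ j : ZMod (2 * n + 1), (c j : ℂ) * ω ^ j.val
        = 1 + ∑ i, χ (y i) + ∑ i, χ (-(y i)) := by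
      simp only [hcdef]
      push_cast
      simp only [add_mul]
      rw [Finset.sum_add_distrib, Finset.sum_add_distrib, hfibχ y, hfibχ (fun i => -(y i))]
      congr 2
      rw [Finset.sum_eq_single (0 : ZMod (2 * n + 1))]
      · simp
      · intro j _ hj
        rw [if_neg hj, zero_mul]
      · intro h
        exact absurd (Finset.mem_univ _) h
    rw [e1]
    rw [Finset.sum_add_distrib] at hkey
    linear_combination hkey
  have hc1 : ∀ j, c j = 1 := aux_count hprim c hcsum hczero
  -- conclusions
  have hc0 : ∀ i : Fin n, y i ≠ 0 := by
    intro i hi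
    have h := hc1 0
    simp only [hcdef] at h
    rw [if_pos trivial] at h
    have hmem : i ∈ Finset.univ.filter (fun k => y k = 0) :=
      Finset.mem_filter.mpr ⟨Finset.mem_univ _, hi⟩
    have := Finset.card_pos.mpr ⟨i, hmem⟩
    omega
  have hcard : ∀ j : ZMod (2 * n + 1), j ≠ 0 →
      (Finset.univ.filter (fun i => y i = j)).card
        + (Finset.univ.filter (fun i => -(y i) = j)).card = 1 := by
    intro j hj
    have h := hc1 j
    rw [hcdef] at h
    simp only [if_neg hj] at h
    omega
  constructor
  · rintro (i | i) (i' | i') h <;> simp only [Sum.elim_inl, Sum.elim_inr] at h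
    · have hz := hc0 i
      have hcd := hcard (y i) hz
      have hi1 : i ∈ Finset.univ.filter (fun k => y k = y i) :=
        Finset.mem_filter.mpr ⟨Finset.mem_univ _, rfl⟩
      have hi2 : i' ∈ Finset.univ.filter (fun k => y k = y i) :=
        Finset.mem_filter.mpr ⟨Finset.mem_univ _, h.symm⟩
      have : i = i' := Finset.card_le_one.mp (by omega) i hi1 i' hi2
      rw [this]
    · exfalso
      have hz := hc0 i
      have hcd := hcard (y i) hz
      have hi1 : i ∈ Finset.univ.filter (fun k => y k = y i) :=
        Finset.mem_filter.mpr ⟨Finset.mem_univ _, rfl⟩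
      have hi2 : i' ∈ Finset.univ.filter (fun k => -(y k) = y i) :=
        Finset.mem_filter.mpr ⟨Finset.mem_univ _, h.symm⟩
      have h1 := Finset.card_pos.mpr ⟨i, hi1⟩
      have h2 := Finset.card_pos.mpr ⟨i', hi2⟩
      omega
    · exfalso
      have hz := hc0 i'
      have hcd := hcard (y i') hz
      have hi1 : i' ∈ Finset.univ.filter (fun k => y k = y i') :=
        Finset.mem_filter.mpr ⟨Finset.mem_univ _, rfl⟩
      have hi2 : i ∈ Finset.univ.filter (fun k => -(y k) = y i') :=
        Finset.mem_filter.mpr ⟨Finset.mem_univ _, h⟩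
      have h1 := Finset.card_pos.mpr ⟨i', hi1⟩
      have h2 := Finset.card_pos.mpr ⟨i, hi2⟩
      omega
    · have hz : -(y i) ≠ 0 := neg_ne_zero.mpr (hc0 i)
      have hcd := hcard (-(y i)) hz
      have hi1 : i ∈ Finset.univ.filter (fun k => -(y k) = -(y i)) :=
        Finset.mem_filter.mpr ⟨Finset.mem_univ _, rfl⟩
      have hi2 : i' ∈ Finset.univ.filter (fun k => -(y k) = -(y i)) :=
        Finset.mem_filter.mpr ⟨Finset.mem_univ _, h.symm⟩
      have : i = i' := Finset.card_le_one.mp (by omega) i hi1 i' hi2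
      rw [this]
  · ext z
    simp only [Set.mem_range, Set.mem_setOf_eq]
    constructor
    · rintro ⟨(i | i), rfl⟩
      · exact hc0 i
      · simp only [Sum.elim_inr]
        exact neg_ne_zero.mpr (hc0 i)
    · intro hz
      have hcd := hcard z hz
      have : 0 < (Finset.univ.filter (fun i => y i = z)).card
          ∨ 0 < (Finset.univ.filter (fun i => -(y i) = z)).card := by omega
      rcases this with h | h
      · obtain ⟨i, hi⟩ := Finset.card_pos.mp h
        exact ⟨Sum.inl i, (Finset.mem_filter.mp hi).2⟩
      · obtain ⟨i, hi⟩ := Finset.card_pos.mp h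
        exact ⟨Sum.inr i, (Finset.mem_filter.mp hi).2⟩
end
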